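/- arXiv:1709.09459 — 5 statements merged into one kernel-verified Lean document; each statement's English description precedes it below -/
import Mathlib

section
/- Let A be an irreducible nonnegative matrix indexed by a countable set S (i.e., for all x,y in S there exists n ≥ 1 with A^n(x,y) > 0), and assume A is aperiodic (gcd{n ≥ 1 : A^n(x,x) > 0} = 1 for some x). Then the limit ρ(A) := lim_{n→∞} (A^n(x,x))^{1/n} exists in (0,∞] and does not depend on the choice of x ∈ S. -/
open scoped ENNReal
open Filter

variable {S : Type*}

/-- Matrix powers of a nonnegative (possibly infinite-sum) matrix on a countable set. -/
noncomputable def matPow [DecidableEq S] (A : S → S → ℝ≥0∞) : ℕ → S → S → ℝ≥0∞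
  | 0 => fun x y => if x = y then 1 else 0
  | n + 1 => fun x y => ∑' z, matPow A n x z * A z y

lemma matPow_add [DecidableEq S] (A : S → S → ℝ≥0∞) (m n : ℕ) (x y : S) :
    matPow A (m + n) x y = ∑' z, matPow A m x z * matPow A n z y := by
  induction n generalizing y with
  | zero =>
    simp only [Nat.add_zero, matPow]
    rw [show (∑' z, matPow A m x z * if z = y then 1 else 0)
        = ∑' z, if z = y then matPow A m x y else 0 by
      congr 1; funext z
      rcases eq_or_ne z y with h | h
      · subst h; simp
      · simp [h]]
    exact (tsum_ite_eq y (fun _ => matPow A m x y)).symm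
  | succ n ih =>
    show matPow A (m + n + 1) x y = _
    simp only [matPow]
    calc (∑' z, matPow A (m+n) x z * A z y)
        = ∑' z, (∑' w, matPow A m x w * matPow A n w z) * A z y := by
          congr 1; funext z; rw [ih]
      _ = ∑' z, ∑' w, matPow A m x w * matPow A n w z * A z y := by
          congr 1; funext z; rw [ENNReal.tsum_mul_right]
      _ = ∑' w, ∑' z, matPow A m x w * (matPow A n w z * A z y) := by
          rw [ENNReal.tsum_comm]; simp [mul_assoc]
      _ = ∑' w, matPow A m x w * ∑' z, matPow A n w z * A z y := by
          congr 1; funext w; rw [ENNReal.tsum_mul_left]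

lemma matPow_add_ge [DecidableEq S] (A : S → S → ℝ≥0∞) (m n : ℕ) (x y z : S) :
    matPow A m x z * matPow A n z y ≤ matPow A (m + n) x y := by
  rw [matPow_add]; exact ENNReal.le_tsum z

lemma mul_mem_of_addclosed {D : Set ℕ} (hadd : ∀ a ∈ D, ∀ b ∈ D, a + b ∈ D)
    {d : ℕ} (hd : d ∈ D) : ∀ k, 1 ≤ k → k * d ∈ D := by
  intro k hk
  induction k with
  | zero => omega
  | succ k ih =>
    rcases Nat.eq_or_lt_of_le hk with h | h
    · simpa [← h] using hd
    · have := ih (by omega)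
      have := hadd _ this _ hd
      simpa [Nat.succ_mul] using this

lemma addclosed_gcd_one_cofinite {D : Set ℕ}
    (hpos : ∀ n ∈ D, 1 ≤ n)
    (hadd : ∀ a ∈ D, ∀ b ∈ D, a + b ∈ D)
    (hgcd : ∀ d : ℕ, (∀ n ∈ D, d ∣ n) → d = 1) :
    ∃ N, ∀ n, N ≤ n → n ∈ D := by
  -- the subgroup of ℤ generated by D is everything
  set H : AddSubgroup ℤ := AddSubgroup.closure ((↑) '' D) with hH
  obtain ⟨a, ha⟩ := Int.subgroup_cyclic H
  have hdvd : ∀ n ∈ D, a ∣ (n : ℤ) := by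
    intro n hn
    have : (n : ℤ) ∈ H := AddSubgroup.subset_closure ⟨n, hn, rfl⟩
    rw [ha, AddSubgroup.mem_closure_singleton] at this
    obtain ⟨m, hm⟩ := this
    exact ⟨m, by rw [← hm]; simp [zsmul_eq_mul, mul_comm]⟩
  have hnat : a.natAbs = 1 := by
    apply hgcd
    intro n hn
    have := hdvd n hn
    exact Int.ofNat_dvd.mp (by simpa using (Int.natAbs_dvd.mpr this))
  have h1 : (1 : ℤ) ∈ H := by
    rw [ha, AddSubgroup.mem_closure_singleton]
    rcases Int.natAbs_eq a with h | h
    · exact ⟨1, by rw [one_smul]; omega⟩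
    · exact ⟨-1, by rw [neg_smul, one_smul]; omega⟩
  -- extract representation 1 = p - m with p, m ∈ D ∪ {0}
  have hrep : ∃ p m : ℕ, (p ∈ D ∨ p = 0) ∧ (m ∈ D ∨ m = 0) ∧ (1 : ℤ) = (p : ℤ) - m := by
    have key : ∀ x ∈ H, ∃ p m : ℕ, (p ∈ D ∨ p = 0) ∧ (m ∈ D ∨ m = 0) ∧ x = (p : ℤ) - m := by
      intro x hx
      induction hx using AddSubgroup.closure_induction with
      | mem y hy =>
        obtain ⟨n, hn, rfl⟩ := hy
        exact ⟨n, 0, Or.inl hn, Or.inr rfl, by simp⟩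
      | zero => exact ⟨0, 0, Or.inr rfl, Or.inr rfl, by simp⟩
      | add y z hy hz ihy ihz =>
        obtain ⟨p1, m1, hp1, hm1, rfl⟩ := ihy
        obtain ⟨p2, m2, hp2, hm2, rfl⟩ := ihz
        refine ⟨p1 + p2, m1 + m2, ?_, ?_, by push_cast; ring⟩
        · rcases hp1 with h1 | h1 <;> rcases hp2 with h2 | h2
          · exact Or.inl (hadd _ h1 _ h2)
          · subst h2; simpa using Or.inl h1
          · subst h1; simpa using Or.inl h2
          · subst h1; subst h2; exact Or.inr rfl
        · rcases hm1 with h1 | h1 <;> rcases hm2 with h2 | h2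
          · exact Or.inl (hadd _ h1 _ h2)
          · subst h2; simpa using Or.inl h1
          · subst h1; simpa using Or.inl h2
          · subst h1; subst h2; exact Or.inr rfl
      | neg y hy ihy =>
        obtain ⟨p, m, hp, hm, rfl⟩ := ihy
        exact ⟨m, p, hm, hp, by ring⟩
    exact key 1 h1
  obtain ⟨p, m, hp, hm, heq⟩ := hrep
  have hpm : p = m + 1 := by omega
  have hpD : p ∈ D := by
    rcases hp with h | h
    · exact h
    · omega
  rcases hm with hmD | hm0
  · -- m and m+1 both in D
    have hm1 : 1 ≤ m := hpos m hmD
    refine ⟨m * m + m, ?_⟩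
    intro n hn
    have hm0 : 0 < m := hm1
    set q := n / m with hq
    set r := n % m with hr
    have hrm : r < m := Nat.mod_lt _ hm0
    have hnqr : n = m * q + r := (Nat.div_add_mod n m).symm
    have hqm : m + 1 ≤ q := by
      have : m * (m + 1) ≤ n := by nlinarith
      calc m + 1 ≤ (m * (m+1)) / m := by
            rw [Nat.mul_div_cancel_left _ hm0]
        _ ≤ n / m := Nat.div_le_div_right this
    have hkey : n = (q - r) * m + r * (m + 1) := by
      have : r ≤ q := by omega
      zify [this]
      push_cast [hnqr]
      ring
    have h1 : (q - r) * m ∈ D := mul_mem_of_addclosed hadd hmD _ (by omega)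
    rcases Nat.eq_zero_or_pos r with h | h
    · rw [hkey, h]; simpa [h] using h1
    · have h2 : r * (m + 1) ∈ D := mul_mem_of_addclosed hadd (hpm ▸ hpD) _ h
      rw [hkey]; exact hadd _ h1 _ h2
  · -- 1 ∈ D
    subst hm0
    have h1D : (1 : ℕ) ∈ D := by rwa [hpm] at hpD
    exact ⟨1, fun n hn => by simpa using mul_mem_of_addclosed hadd h1D n hn⟩

lemma tendsto_rpow_exp {b : ℝ≥0∞} (hb0 : b ≠ 0) (hbt : b ≠ ⊤) {e : ℕ → ℝ} {L : ℝ}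
    (he : Tendsto e atTop (nhds L)) :
    Tendsto (fun n => b ^ e n) atTop (nhds (b ^ L)) := by
  have hpos : 0 < b.toReal := ENNReal.toReal_pos hb0 hbt
  have key : ∀ x : ℝ, b ^ x = ENNReal.ofReal (b.toReal ^ x) := by
    intro x
    rw [← ENNReal.ofReal_rpow_of_pos hpos, ENNReal.ofReal_toReal hbt]
  simp only [key]
  refine ENNReal.continuous_ofReal.continuousAt.tendsto.comp ?_
  have : Continuous (fun x : ℝ => b.toReal ^ x) := by
    simp only [Real.rpow_def_of_pos hpos]
    exact Real.continuous_exp.comp (continuous_const.mul continuous_id)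
  exact this.continuousAt.tendsto.comp he

lemma nat_inv_tendsto : Tendsto (fun n : ℕ => (n : ℝ)⁻¹) atTop (nhds 0) :=
  tendsto_inv_atTop_zero.comp tendsto_natCast_atTop_atTop

lemma tendsto_div_div {N k : ℕ} (hk : 1 ≤ k) :
    Tendsto (fun n : ℕ => (((n - N) / k : ℕ) : ℝ) * (n : ℝ)⁻¹) atTop (nhds ((k : ℝ)⁻¹)) := by
  have hk' : (0:ℝ) < k := by exact_mod_cast hk
  have hlim : Tendsto (fun n : ℕ => (k:ℝ)⁻¹ - (((N:ℝ) + k)/k) * (n:ℝ)⁻¹) atTop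
      (nhds ((k:ℝ)⁻¹)) := by
    have := (tendsto_const_nhds (x := ((N:ℝ)+k)/k) (f := atTop (α := ℕ))).mul nat_inv_tendsto
    simpa using tendsto_const_nhds.sub this
  refine tendsto_of_tendsto_of_tendsto_of_le_of_le' hlim tendsto_const_nhds ?_ ?_
  · filter_upwards [eventually_ge_atTop N, eventually_ge_atTop 1] with n hn hn1
    set q := (n - N) / k with hq
    have hn0 : (0:ℝ) < n := by exact_mod_cast hn1
    have hmod : (n - N) % k < k := Nat.mod_lt _ hk
    have hq2 : n - N < (q + 1) * k := by
      calc n - N = k * q + (n - N) % k := (Nat.div_add_mod _ _).symm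
        _ < k * q + k := Nat.add_lt_add_left hmod _
        _ = (q + 1) * k := by ring
    have hq2' : (n:ℝ) - N < ((q:ℝ) + 1) * k := by
      have := (Nat.cast_lt (α := ℝ)).mpr hq2
      push_cast at this
      rw [Nat.cast_sub hn] at this
      linarith
    have hqge : ((n:ℝ) - N - k)/k ≤ (q:ℝ) := by
      rw [div_le_iff₀ hk']
      nlinarith
    calc (k:ℝ)⁻¹ - (((N:ℝ) + k)/k) * (n:ℝ)⁻¹ = ((n:ℝ) - N - k)/k * (n:ℝ)⁻¹ := by
          field_simp
          ring
      _ ≤ (q:ℝ) * (n:ℝ)⁻¹ := by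
          exact mul_le_mul_of_nonneg_right hqge (inv_nonneg.mpr hn0.le)
  · filter_upwards [eventually_ge_atTop N, eventually_ge_atTop 1] with n hn hn1
    set q := (n - N) / k with hq
    have hn0 : (0:ℝ) < n := by exact_mod_cast hn1
    have hq1 : q * k ≤ n - N := Nat.div_mul_le_self _ _
    have hq1' : (q:ℝ) * k ≤ (n:ℝ) - N := by
      have := (Nat.cast_le (α := ℝ)).mpr hq1
      push_cast at this
      rw [Nat.cast_sub hn] at this
      linarith
    have : (q:ℝ) ≤ (n:ℝ)/k := by
      rw [le_div_iff₀ hk']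
      have : (0:ℝ) ≤ N := Nat.cast_nonneg N
      linarith
    calc (q:ℝ) * (n:ℝ)⁻¹ ≤ ((n:ℝ)/k) * (n:ℝ)⁻¹ :=
          mul_le_mul_of_nonneg_right this (inv_nonneg.mpr hn0.le)
      _ = (k:ℝ)⁻¹ := by field_simp

lemma fekete_ennreal (a : ℕ → ℝ≥0∞)
    (hmul : ∀ m n, a m * a n ≤ a (m + n))
    (N : ℕ) (hN : 1 ≤ N) (hpos : ∀ n, N ≤ n → 0 < a n) :
    Tendsto (fun n : ℕ => a n ^ ((n:ℝ)⁻¹)) atTop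
      (nhds (⨆ k : ℕ, ⨆ _ : 1 ≤ k, a k ^ ((k:ℝ)⁻¹))) := by
  set f : ℕ → ℝ≥0∞ := fun n => a n ^ ((n:ℝ)⁻¹) with hf
  set r : ℝ≥0∞ := ⨆ k : ℕ, ⨆ _ : 1 ≤ k, a k ^ ((k:ℝ)⁻¹) with hr
  have nmul : ∀ q k s, a k ^ q * a s ≤ a (k * q + s) := by
    intro q
    induction q with
    | zero => intro k s; simp
    | succ q ih =>
      intro k s
      calc a k ^ (q+1) * a s = a k * (a k ^ q * a s) := by ring
        _ ≤ a k * a (k * q + s) := mul_le_mul_right (ih k s) _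
        _ ≤ a (k + (k * q + s)) := hmul _ _
        _ = a (k * (q+1) + s) := by ring_nf
  refine tendsto_of_le_liminf_of_limsup_le ?_ ?_ (by isBoundedDefault) (by isBoundedDefault)
  · -- r ≤ liminf f
    rw [hr]
    refine iSup₂_le fun k hk => ?_
    rcases eq_or_ne (a k) 0 with hak | hak0
    · have hkpos : (0:ℝ) < (k:ℝ)⁻¹ := inv_pos.mpr (by exact_mod_cast hk)
      simp [hak, ENNReal.zero_rpow_of_pos hkpos]
    rcases eq_or_ne (a k) ⊤ with hak | hakt
    · -- top case: f is eventually ⊤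
      refine Filter.le_liminf_of_le (by isBoundedDefault) ?_
      filter_upwards [eventually_ge_atTop (N + k)] with n hn
      have h1 : 0 < a (n - k) := hpos _ (by omega)
      have h2 : a k * a (n - k) ≤ a n := by
        have := hmul k (n - k)
        rwa [show k + (n - k) = n by omega] at this
      have h3 : a n = ⊤ := by
        rw [hak] at h2
        rw [ENNReal.top_mul h1.ne'] at h2
        exact top_le_iff.mp h2
      have h4 : f n = ⊤ := by
        rw [hf]
        simp only [h3]
        exact ENNReal.top_rpow_of_pos (inv_pos.mpr (by exact_mod_cast (show 0 < n by omega)))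
      simp [h4]
    · -- main case : 0 < a k < ⊤
      set c : ℝ≥0∞ := ((Finset.range k).inf fun j => a (N + j)) ⊓ 1 with hc
      have hc1 : c ≤ 1 := inf_le_right
      have hct : c ≠ ⊤ := fun h => by simp [h] at hc1
      have hc0 : c ≠ 0 := by
        have h1 : (0:ℝ≥0∞) < (Finset.range k).inf fun j => a (N + j) := by
          rw [Finset.lt_inf_iff (by simp : (0:ℝ≥0∞) < ⊤)]
          intro j hj
          exact hpos (N + j) (by omega)
        exact (lt_inf_iff.mpr ⟨h1, zero_lt_one⟩).ne'
      have hcs : ∀ s, N ≤ s → s < N + k → c ≤ a s := by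
        intro s hs1 hs2
        have : s - N ∈ Finset.range k := Finset.mem_range.mpr (by omega)
        calc c ≤ (Finset.range k).inf fun j => a (N + j) := inf_le_left
          _ ≤ a (N + (s - N)) := Finset.inf_le this
          _ = a s := by congr 1; omega
      -- lower bound sequence
      set g : ℕ → ℝ≥0∞ := fun n =>
        a k ^ ((((n - N) / k : ℕ) : ℝ) * (n:ℝ)⁻¹) * c ^ ((n:ℝ)⁻¹) with hg
      have hglim : Tendsto g atTop (nhds (a k ^ ((k:ℝ)⁻¹))) := by
        have t1 := tendsto_rpow_exp hak0 hakt (tendsto_div_div (N := N) hk)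
        have t2 := tendsto_rpow_exp hc0 hct nat_inv_tendsto
        rw [ENNReal.rpow_zero] at t2
        have := ENNReal.Tendsto.mul t1 (Or.inr ENNReal.one_ne_top) t2
          (Or.inl one_ne_zero)
        simpa using this
      have hle : ∀ᶠ n in atTop, g n ≤ f n := by
        filter_upwards [eventually_ge_atTop N, eventually_ge_atTop 1] with n hn hn1
        set q := (n - N) / k with hq
        set s := N + (n - N) % k with hs
        have hdm := Nat.div_add_mod (n - N) k
        rw [← hq] at hdm
        have hmod : (n - N) % k < k := Nat.mod_lt _ hk
        have hnqs : k * q + s = n := by omega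
        have hbound : a k ^ q * c ≤ a n := by
          calc a k ^ q * c ≤ a k ^ q * a s :=
                mul_le_mul_right (hcs s (by omega) (by omega)) _
            _ ≤ a (k * q + s) := nmul q k s
            _ = a n := by rw [hnqs]
        have hinv : (0:ℝ) ≤ (n:ℝ)⁻¹ := by positivity
        calc g n = (a k ^ q * c) ^ ((n:ℝ)⁻¹) := by
              rw [hg]
              simp only
              rw [ENNReal.mul_rpow_of_nonneg _ _ hinv, ENNReal.rpow_mul,
                ENNReal.rpow_natCast]
          _ ≤ a n ^ ((n:ℝ)⁻¹) := ENNReal.rpow_le_rpow hbound hinv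
      calc a k ^ ((k:ℝ)⁻¹) = liminf g atTop := (hglim.liminf_eq).symm
        _ ≤ liminf f atTop := liminf_le_liminf hle
  · -- limsup f ≤ r
    refine Filter.limsup_le_of_le (by isBoundedDefault) ?_
    filter_upwards [eventually_ge_atTop 1] with n hn
    exact le_iSup₂ (f := fun k (_ : 1 ≤ k) => a k ^ ((k:ℝ)⁻¹)) n hn

/-- Comparison lemma: cross inequalities force `ra ≤ rb`. -/
lemma spectral_compare (a b : ℕ → ℝ≥0∞) (ra rb : ℝ≥0∞)
    (hlima : Tendsto (fun n : ℕ => a n ^ ((n:ℝ)⁻¹)) atTop (nhds ra))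
    (hrb0 : rb ≠ 0)
    (hsupb : ∀ m : ℕ, 1 ≤ m → b m ≤ rb ^ (m:ℝ))
    (s t : ℕ) (hs : 1 ≤ s) (α β : ℝ≥0∞) (hα : α ≠ 0) (hβ : β ≠ 0)
    (hαβ : α * β ≤ b (s + t))
    (hcross : ∀ n, α * a n * β ≤ b (s + n + t)) : ra ≤ rb := by
  rcases eq_or_ne rb ⊤ with hrt | hrt
  · simp [hrt]
  set c : ℝ≥0∞ := α * β with hc
  have hc0 : c ≠ 0 := mul_ne_zero hα hβ
  have hctop : c ≠ ⊤ := by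
    have h1 : c ≤ rb ^ ((s + t : ℕ) : ℝ) := hαβ.trans (hsupb _ (by omega))
    have h2 : rb ^ ((s + t : ℕ) : ℝ) ≠ ⊤ :=
      (ENNReal.rpow_lt_top_of_nonneg (by positivity) hrt).ne
    exact fun h => h2 (top_le_iff.mp (h ▸ h1))
  -- the dominating sequence
  set g : ℕ → ℝ≥0∞ := fun n =>
    rb ^ (((s + n + t : ℕ) : ℝ) * (n:ℝ)⁻¹) * (c⁻¹) ^ ((n:ℝ)⁻¹) with hg
  have hglim : Tendsto g atTop (nhds rb) := by
    have he : Tendsto (fun n : ℕ => ((s + n + t : ℕ) : ℝ) * (n:ℝ)⁻¹) atTop (nhds 1) := by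
      have h1 : Tendsto (fun n : ℕ => 1 + ((s + t : ℕ) : ℝ) * (n:ℝ)⁻¹) atTop (nhds 1) := by
        have := (tendsto_const_nhds (x := ((s + t : ℕ) : ℝ)) (f := atTop (α := ℕ))).mul
          nat_inv_tendsto
        simpa using tendsto_const_nhds.add this
      refine h1.congr' ?_
      filter_upwards [eventually_ge_atTop 1] with n hn
      have hn0 : (n:ℝ) ≠ 0 := by positivity
      push_cast
      field_simp
      ring
    have t1 := tendsto_rpow_exp hrb0 hrt he
    have t2 := tendsto_rpow_exp (ENNReal.inv_ne_zero.mpr hctop) (ENNReal.inv_ne_top.mpr hc0) nat_inv_tendsto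
    rw [ENNReal.rpow_zero] at t2
    have h3 := ENNReal.Tendsto.mul t1 (Or.inr ENNReal.one_ne_top) t2 (Or.inl one_ne_zero)
    rw [ENNReal.rpow_one, mul_one] at h3
    exact h3
  refine le_of_tendsto_of_tendsto hlima hglim ?_
  filter_upwards [eventually_ge_atTop 1] with n hn
  have hinv : (0:ℝ) ≤ (n:ℝ)⁻¹ := by positivity
  have h1 : a n * c ≤ rb ^ ((s + n + t : ℕ) : ℝ) := by
    calc a n * c = α * a n * β := by rw [hc]; ring
      _ ≤ b (s + n + t) := hcross n
      _ ≤ rb ^ ((s + n + t : ℕ) : ℝ) := hsupb _ (by omega)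
  have h2 : a n ≤ rb ^ ((s + n + t : ℕ) : ℝ) * c⁻¹ := by
    rw [← ENNReal.le_div_iff_mul_le (Or.inl hc0) (Or.inl hctop)] at h1
    rwa [ENNReal.div_eq_inv_mul, mul_comm] at h1
  calc a n ^ ((n:ℝ)⁻¹) ≤ (rb ^ ((s + n + t : ℕ) : ℝ) * c⁻¹) ^ ((n:ℝ)⁻¹) :=
        ENNReal.rpow_le_rpow h2 hinv
    _ = g n := by
        rw [hg]
        simp only
        rw [ENNReal.mul_rpow_of_nonneg _ _ hinv, ← ENNReal.rpow_mul]

theorem spectral_radius_exists [Countable S] [DecidableEq S] (A : S → S → ℝ≥0∞)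
    (hfin : ∀ x y, A x y ≠ ⊤)
    (hirr : ∀ x y : S, ∃ n, 1 ≤ n ∧ 0 < matPow A n x y)
    (haper : ∃ x : S, ∀ d : ℕ, (∀ n, 1 ≤ n → 0 < matPow A n x x → d ∣ n) → d = 1) :
    ∃ r : ℝ≥0∞, 0 < r ∧ ∀ x : S,
      Tendsto (fun n : ℕ => (matPow A n x x) ^ ((n : ℝ)⁻¹)) atTop (nhds r) := by
  obtain ⟨x₀, hx₀⟩ := haper
  set a : S → ℕ → ℝ≥0∞ := fun x n => matPow A n x x with ha
  have hmul : ∀ x : S, ∀ m n, a x m * a x n ≤ a x (m + n) := fun x m n =>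
    matPow_add_ge A m n x x x
  set D : S → Set ℕ := fun x => {n | 1 ≤ n ∧ 0 < a x n} with hD
  have hDadd : ∀ x : S, ∀ p ∈ D x, ∀ q ∈ D x, p + q ∈ D x := by
    intro x p hp q hq
    refine ⟨by have := hp.1; omega, ?_⟩
    exact lt_of_lt_of_le (ENNReal.mul_pos hp.2.ne' hq.2.ne') (hmul x p q)
  have hDgcd : ∀ x : S, ∀ d : ℕ, (∀ n ∈ D x, d ∣ n) → d = 1 := by
    intro x d hd
    obtain ⟨s, hs, hspos⟩ := hirr x x₀
    obtain ⟨t, ht, htpos⟩ := hirr x₀ x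
    have hst : s + t ∈ D x :=
      ⟨by omega, lt_of_lt_of_le (ENNReal.mul_pos hspos.ne' htpos.ne')
        (matPow_add_ge A s t x x x₀)⟩
    apply hx₀
    intro n hn hnpos
    have h1 : s + n + t ∈ D x := by
      refine ⟨by omega, ?_⟩
      have e1 : matPow A s x x₀ * matPow A n x₀ x₀ ≤ matPow A (s + n) x x₀ :=
        matPow_add_ge A s n x x₀ x₀
      have e2 : matPow A (s + n) x x₀ * matPow A t x₀ x ≤ matPow A (s + n + t) x x :=
        matPow_add_ge A (s + n) t x x x₀
      have : 0 < matPow A s x x₀ * matPow A n x₀ x₀ * matPow A t x₀ x :=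
        ENNReal.mul_pos (ENNReal.mul_pos hspos.ne' hnpos.ne').ne' htpos.ne'
      exact lt_of_lt_of_le this ((mul_le_mul_left e1 _).trans e2)
    have hdvd := Nat.dvd_sub (hd _ h1) (hd _ hst)
    rwa [show s + n + t - (s + t) = n by omega] at hdvd
  set R : S → ℝ≥0∞ := fun x => ⨆ k : ℕ, ⨆ _ : 1 ≤ k, a x k ^ ((k:ℝ)⁻¹) with hR
  have hlim : ∀ x : S, Tendsto (fun n : ℕ => a x n ^ ((n:ℝ)⁻¹)) atTop (nhds (R x)) := by
    intro x
    obtain ⟨N, hN⟩ := addclosed_gcd_one_cofinite (fun n hn => hn.1) (hDadd x) (hDgcd x)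
    exact fekete_ennreal (a x) (hmul x) (max N 1) (le_max_right _ _)
      (fun n hn => (hN n (le_trans (le_max_left _ _) hn)).2)
  have hsup : ∀ x : S, ∀ m : ℕ, 1 ≤ m → a x m ≤ R x ^ (m:ℝ) := by
    intro x m hm
    have hm0 : ((m:ℝ)) ≠ 0 := by positivity
    have h : a x m ^ ((m:ℝ)⁻¹) ≤ R x :=
      le_iSup₂ (f := fun k (_ : 1 ≤ k) => a x k ^ ((k:ℝ)⁻¹)) m hm
    calc a x m = (a x m ^ ((m:ℝ)⁻¹)) ^ ((m:ℝ)) := by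
          rw [← ENNReal.rpow_mul, inv_mul_cancel₀ hm0, ENNReal.rpow_one]
      _ ≤ R x ^ ((m:ℝ)) := ENNReal.rpow_le_rpow h (by positivity)
  have hRpos : ∀ x : S, R x ≠ 0 := by
    intro x
    obtain ⟨n, hn, hnpos⟩ := hirr x x
    have h : a x n ^ ((n:ℝ)⁻¹) ≤ R x :=
      le_iSup₂ (f := fun k (_ : 1 ≤ k) => a x k ^ ((k:ℝ)⁻¹)) n hn
    have hpos : 0 < a x n ^ ((n:ℝ)⁻¹) := by
      rcases eq_or_ne (a x n) ⊤ with htop | htop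
      · rw [htop, ENNReal.top_rpow_of_pos (inv_pos.mpr (by exact_mod_cast hn))]
        exact (by simp : (0:ℝ≥0∞) < ⊤)
      · exact ENNReal.rpow_pos hnpos htop
    exact (lt_of_lt_of_le hpos h).ne'
  have hcmp : ∀ x y : S, R x ≤ R y := by
    intro x y
    obtain ⟨s, hs, hα⟩ := hirr y x
    obtain ⟨t, ht, hβ⟩ := hirr x y
    refine spectral_compare (a x) (a y) (R x) (R y) (hlim x) (hRpos y)
      (fun m hm => hsup y m hm) s t hs (matPow A s y x) (matPow A t x y)
      hα.ne' hβ.ne' (matPow_add_ge A s t y y x) ?_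
    intro n
    calc matPow A s y x * a x n * matPow A t x y
        ≤ matPow A (s + n) y x * matPow A t x y :=
          mul_le_mul_left (matPow_add_ge A s n y x x) _
      _ ≤ a y (s + n + t) := matPow_add_ge A (s + n) t y y x
  refine ⟨R x₀, pos_iff_ne_zero.mpr (hRpos x₀), fun x => ?_⟩
  have hRx : R x = R x₀ := le_antisymm (hcmp x x₀) (hcmp x₀ x)
  exact hRx ▸ hlim x
end

section
/- Let μ be a nonzero Borel measure on ℝ, ψ(λ) := log ∫ e^{λx} μ(dx), and U := interior of {λ : ψ(λ) < ∞}. Then ψ is differentiable on U and for λ ∈ U, ψ'(λ) = ∫ x μ_λ(dx), where μ_λ(dx) := e^{λx − ψ(λ)} μ(dx) is a probability measure (the mean of the tilted measure). -/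
open scoped ENNReal
open Filter MeasureTheory Real

/-- The moment generating function `Φ(λ) = ∫ e^{λx} μ(dx) ∈ [0,∞]`. -/
noncomputable def mgf' (μ : Measure ℝ) (lam : ℝ) : ℝ≥0∞ :=
  ∫⁻ x, ENNReal.ofReal (Real.exp (lam * x)) ∂μ

/-- The logarithmic moment generating function `ψ(λ) = log Φ(λ)`, valued in `[-∞,∞]`
(with `log ∞ := ∞`). -/
noncomputable def logMgf (μ : Measure ℝ) (lam : ℝ) : EReal :=
  ENNReal.log (mgf' μ lam)

/-- `ψ` as a real-valued function (meaningful on the effective domain where `Φ` is finite). -/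
noncomputable def logMgfReal (μ : Measure ℝ) (lam : ℝ) : ℝ :=
  Real.log (mgf' μ lam).toReal

/-- The exponentially tilted measure `μ_λ(dx) = e^{λx - ψ(λ)} μ(dx)`. -/
noncomputable def tilted' (μ : Measure ℝ) (lam : ℝ) : Measure ℝ :=
  μ.withDensity (fun x => ENNReal.ofReal (Real.exp (lam * x - logMgfReal μ lam)))

section aux

variable {μ : Measure ℝ}

lemma aux_meas (t : ℝ) : AEStronglyMeasurable (fun x => Real.exp (t * x)) μ :=
  (Real.continuous_exp.comp (continuous_const.mul continuous_id')).aestronglyMeasurable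

lemma aux_integrable (t : ℝ) (ht : mgf' μ t ≠ ⊤) :
    Integrable (fun x => Real.exp (t * x)) μ := by
  refine ⟨aux_meas t, ?_⟩
  rw [hasFiniteIntegral_iff_ofReal (ae_of_all _ fun x => (Real.exp_pos _).le)]
  exact lt_top_iff_ne_top.mpr ht

lemma aux_toReal (t : ℝ) :
    (mgf' μ t).toReal = ∫ x, Real.exp (t * x) ∂μ := by
  rw [integral_eq_lintegral_of_nonneg_ae (ae_of_all _ fun x => (Real.exp_pos _).le) (aux_meas t)]
  rfl

lemma aux_exp_bound {a b t x : ℝ} (hat : a ≤ t) (htb : t ≤ b) :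
    Real.exp (t * x) ≤ Real.exp (a * x) + Real.exp (b * x) := by
  rcases le_or_gt 0 x with hx | hx
  · exact le_add_of_nonneg_of_le (Real.exp_pos _).le
      (Real.exp_le_exp.mpr (mul_le_mul_of_nonneg_right htb hx))
  · exact le_add_of_le_of_nonneg
      (Real.exp_le_exp.mpr (mul_le_mul_of_nonpos_right hat hx.le)) (Real.exp_pos _).le

lemma aux_abs_bound {δ : ℝ} (hδ : 0 < δ) (x t : ℝ) :
    |x| * Real.exp (t * x) ≤ δ⁻¹ * (Real.exp ((t + δ) * x) + Real.exp ((t - δ) * x)) := by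
  have h1 : δ * |x| ≤ Real.exp (δ * x) + Real.exp (-(δ * x)) := by
    rcases le_or_gt 0 x with hx | hx
    · have h : δ * |x| ≤ Real.exp (δ * x) := by
        rw [abs_of_nonneg hx]
        have := Real.add_one_le_exp (δ * x)
        linarith
      exact h.trans (le_add_of_nonneg_right (Real.exp_pos _).le)
    · have h : δ * |x| ≤ Real.exp (-(δ * x)) := by
        rw [abs_of_neg hx]
        have := Real.add_one_le_exp (-(δ * x))
        nlinarith
      exact h.trans (le_add_of_nonneg_left (Real.exp_pos _).le)
  have h1' : |x| ≤ δ⁻¹ * (Real.exp (δ * x) + Real.exp (-(δ * x))) := by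
    rw [le_inv_mul_iff₀ hδ]; exact h1
  calc |x| * Real.exp (t * x)
      ≤ (δ⁻¹ * (Real.exp (δ * x) + Real.exp (-(δ * x)))) * Real.exp (t * x) :=
        mul_le_mul_of_nonneg_right h1' (Real.exp_pos _).le
    _ = δ⁻¹ * (Real.exp ((t + δ) * x) + Real.exp ((t - δ) * x)) := by
        rw [show (t + δ) * x = δ * x + t * x by ring, show (t - δ) * x = -(δ * x) + t * x by ring,
          Real.exp_add, Real.exp_add]
        ring

end aux

theorem logMgf_hasDerivAt_mean_tilted (μ : Measure ℝ) (hμ : μ ≠ 0) (lam : ℝ)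
    (hlam : lam ∈ interior {l : ℝ | mgf' μ l ≠ ⊤}) :
    IsProbabilityMeasure (tilted' μ lam) ∧
    HasDerivAt (logMgfReal μ) (∫ x, x ∂(tilted' μ lam)) lam := by
  have : NeZero μ := ⟨hμ⟩
  obtain ⟨ε, hε, hball⟩ := Metric.mem_nhds_iff.mp (mem_interior_iff_mem_nhds.mp hlam)
  set δ : ℝ := ε / 4 with hδdef
  have hδ : 0 < δ := by positivity
  set a : ℝ := lam - 2 * δ with hadef
  set b : ℝ := lam + 2 * δ with hbdef
  have ha : mgf' μ a ≠ ⊤ := hball (by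
    simp only [Metric.mem_ball, Real.dist_eq, hadef]
    rw [abs_of_nonpos (by linarith)]; linarith)
  have hb : mgf' μ b ≠ ⊤ := hball (by
    simp only [Metric.mem_ball, Real.dist_eq, hbdef]
    rw [abs_of_nonneg (by linarith)]; linarith)
  have hlam' : mgf' μ lam ≠ ⊤ := interior_subset hlam
  have int_a := aux_integrable a ha
  have int_b := aux_integrable b hb
  have int_lam := aux_integrable lam hlam'
  -- differentiation under the integral sign
  have key : Integrable (fun x => x * Real.exp (lam * x)) μ ∧
      HasDerivAt (fun t => ∫ x, Real.exp (t * x) ∂μ)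
        (∫ x, x * Real.exp (lam * x) ∂μ) lam := by
    refine hasDerivAt_integral_of_dominated_loc_of_deriv_le (F := fun t x => Real.exp (t * x))
      (F' := fun t x => x * Real.exp (t * x))
      (bound := fun x => δ⁻¹ * (2 * (Real.exp (a * x) + Real.exp (b * x)))) (Metric.ball_mem_nhds lam hδ)
      (Eventually.of_forall fun t => aux_meas t) int_lam
      ((continuous_id.mul (Real.continuous_exp.comp
        (continuous_const.mul continuous_id'))).aestronglyMeasurable)
      (ae_of_all _ fun x t ht => ?_) (((int_a.add int_b).const_mul 2).const_mul δ⁻¹)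
      (ae_of_all _ fun x t _ => ?_)
    · have htb : |t - lam| < δ := by simpa [Real.dist_eq] using ht
      rw [abs_lt] at htb
      have h1 : Real.exp ((t + δ) * x) ≤ Real.exp (a * x) + Real.exp (b * x) :=
        aux_exp_bound (by simp only [hadef]; linarith) (by simp only [hbdef]; linarith)
      have h2 : Real.exp ((t - δ) * x) ≤ Real.exp (a * x) + Real.exp (b * x) :=
        aux_exp_bound (by simp only [hadef]; linarith) (by simp only [hbdef]; linarith)
      have hnorm : ‖x * Real.exp (t * x)‖ = |x| * Real.exp (t * x) := by
        rw [norm_mul, Real.norm_eq_abs, Real.norm_eq_abs, abs_of_pos (Real.exp_pos _)]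
      rw [hnorm]
      refine (aux_abs_bound hδ x t).trans ?_
      exact mul_le_mul_of_nonneg_left (by linarith) (inv_nonneg.mpr hδ.le)
    · have h : HasDerivAt (fun s : ℝ => s * x) x t := hasDerivAt_mul_const x
      simpa [mul_comm, Function.comp_def] using (Real.hasDerivAt_exp (t * x)).comp t h
  obtain ⟨int', hderiv⟩ := key
  set I : ℝ → ℝ := fun t => ∫ x, Real.exp (t * x) ∂μ with hIdef
  have Ipos : 0 < I lam := by
    have := ProbabilityTheory.mgf_pos' (X := id) (t := lam) hμ (by simpa using int_lam)
    simpa [ProbabilityTheory.mgf, hIdef] using this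
  have hlogMgf : logMgfReal μ = fun t => Real.log (I t) := by
    funext t; rw [logMgfReal, aux_toReal]
  have htilted : tilted' μ lam = μ.tilted (fun x => lam * x) := by
    rw [tilted', Measure.tilted, hlogMgf]
    congr 1 with x
    rw [Real.exp_sub, Real.exp_log Ipos]
  have hmean : ∫ x, x ∂(tilted' μ lam) = (I lam)⁻¹ * ∫ x, x * Real.exp (lam * x) ∂μ := by
    rw [htilted, integral_tilted (f := fun x => lam * x) (g := fun x : ℝ => x)]
    rw [← integral_const_mul]
    congr 1 with x
    rw [smul_eq_mul, div_eq_inv_mul]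
    ring
  constructor
  · rw [htilted]
    exact isProbabilityMeasure_tilted int_lam
  · rw [hmean, hlogMgf]
    exact (Real.hasDerivAt_log Ipos.ne').comp lam hderiv
end

section
/- Let μ be a nonzero Borel measure on ℝ, ψ its logarithmic moment generating function, and λ ∈ U := interior of {ψ < ∞}. Then ψ is twice differentiable at λ and ψ''(λ) equals the variance of the tilted probability measure μ_λ(dx) = e^{λx − ψ(λ)} μ(dx). -/
open scoped ENNReal
open Filter MeasureTheory

lemma integrable_exp_of_mem (μ : Measure ℝ) {l : ℝ} (hl : mgf' μ l ≠ ⊤) :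
    Integrable (fun x => Real.exp (l * x)) μ := by
  refine ⟨(Real.continuous_exp.comp (continuous_const.mul continuous_id)).aestronglyMeasurable, ?_⟩
  rw [hasFiniteIntegral_iff_ofReal (Filter.Eventually.of_forall fun x => (Real.exp_pos _).le)]
  exact lt_top_iff_ne_top.2 hl

lemma integrable_abs_pow_exp (μ : Measure ℝ) {l δ : ℝ} (hδ : 0 < δ)
    (h₁ : mgf' μ (l + δ) ≠ ⊤) (h₂ : mgf' μ (l - δ) ≠ ⊤) (n : ℕ) :
    Integrable (fun x => |x| ^ n * Real.exp (l * x)) μ := by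
  have hint := (((integrable_exp_of_mem μ h₁).add (integrable_exp_of_mem μ h₂)).const_mul
    ((n.factorial : ℝ) / δ ^ n))
  refine hint.mono' ?_ (Filter.Eventually.of_forall fun x => ?_)
  · exact ((continuous_abs.pow n).mul
      (Real.continuous_exp.comp (continuous_const.mul continuous_id))).aestronglyMeasurable
  · rw [Real.norm_eq_abs, abs_of_nonneg (by positivity)]
    have h1 : |x| ^ n ≤ (n.factorial : ℝ) / δ ^ n * Real.exp (δ * |x|) := by
      have h := Real.pow_div_factorial_le_exp (δ * |x|) (mul_nonneg hδ.le (abs_nonneg x)) n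
      rw [mul_pow, div_le_iff₀ (by positivity)] at h
      calc |x| ^ n = δ ^ n * |x| ^ n / δ ^ n := by field_simp
        _ ≤ Real.exp (δ * |x|) * (n.factorial : ℝ) / δ ^ n := by gcongr
        _ = (n.factorial : ℝ) / δ ^ n * Real.exp (δ * |x|) := by ring
    have h2 : Real.exp (δ * |x|) * Real.exp (l * x)
        ≤ Real.exp ((l + δ) * x) + Real.exp ((l - δ) * x) := by
      rw [← Real.exp_add]
      rcases le_or_gt 0 x with hx | hx
      · rw [abs_of_nonneg hx]
        have : δ * x + l * x = (l + δ) * x := by ring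
        rw [this]
        exact le_add_of_nonneg_right (Real.exp_pos _).le
      · rw [abs_of_neg hx]
        have : δ * -x + l * x = (l - δ) * x := by ring
        rw [this]
        exact le_add_of_nonneg_left (Real.exp_pos _).le
    calc |x| ^ n * Real.exp (l * x)
        ≤ ((n.factorial : ℝ) / δ ^ n * Real.exp (δ * |x|)) * Real.exp (l * x) := by
          have := (Real.exp_pos (l * x)).le; gcongr
      _ = (n.factorial : ℝ) / δ ^ n * (Real.exp (δ * |x|) * Real.exp (l * x)) := by ring
      _ ≤ (n.factorial : ℝ) / δ ^ n * (Real.exp ((l + δ) * x) + Real.exp ((l - δ) * x)) := by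
          gcongr

lemma hasDerivAt_integral_pow_exp (μ : Measure ℝ) {y : ℝ}
    (hy : y ∈ interior {l : ℝ | mgf' μ l ≠ ⊤}) (n : ℕ) :
    HasDerivAt (fun l => ∫ x, x ^ n * Real.exp (l * x) ∂μ)
      (∫ x, x ^ (n + 1) * Real.exp (y * x) ∂μ) y := by
  obtain ⟨ε, εpos, hball⟩ := Metric.mem_nhds_iff.mp (isOpen_interior.mem_nhds hy)
  have hS : ∀ z : ℝ, |z - y| < ε → mgf' μ z ≠ ⊤ := by
    intro z hz
    exact interior_subset (hball (by simpa [Metric.mem_ball, Real.dist_eq] using hz))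
  set δ := ε / 5 with hδdef
  have hδ : 0 < δ := by positivity
  have hmem : ∀ c : ℝ, |c| < ε → mgf' μ (y + c) ≠ ⊤ := fun c hc => hS _ (by simpa using hc)
  -- integrability of |x|^m * exp(z x) for z close to y
  have hint : ∀ (c : ℝ), |c| ≤ 3 * δ → ∀ m : ℕ,
      Integrable (fun x => |x| ^ m * Real.exp ((y + c) * x)) μ := by
    intro c hc m
    refine integrable_abs_pow_exp μ hδ ?_ ?_ m
    · have : y + c + δ = y + (c + δ) := by ring
      rw [this]
      exact hmem _ (by rw [abs_lt]; constructor <;> [linarith [neg_abs_le c, hδdef]; linarith [le_abs_self c, hδdef]])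
    · have : y + c - δ = y + (c - δ) := by ring
      rw [this]
      exact hmem _ (by rw [abs_lt]; constructor <;> [linarith [neg_abs_le c, hδdef]; linarith [le_abs_self c, hδdef]])
  have hmeas : ∀ t : ℝ, ∀ m : ℕ, AEStronglyMeasurable (fun x : ℝ => x ^ m * Real.exp (t * x)) μ :=
    fun t m => ((continuous_pow m).mul
      (Real.continuous_exp.comp (continuous_const.mul continuous_id))).aestronglyMeasurable
  have habs : ∀ t : ℝ, ∀ m : ℕ, Integrable (fun x => |x| ^ m * Real.exp (t * x)) μ →
      Integrable (fun x : ℝ => x ^ m * Real.exp (t * x)) μ := by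
    intro t m h
    refine h.mono' (hmeas t m) (Filter.Eventually.of_forall fun x => ?_)
    rw [Real.norm_eq_abs, abs_mul, abs_pow, abs_of_nonneg (Real.exp_pos _).le]
  have key := hasDerivAt_integral_of_dominated_loc_of_deriv_le (μ := μ)
      (F := fun t x => x ^ n * Real.exp (t * x))
      (F' := fun t x => x ^ (n + 1) * Real.exp (t * x))
      (bound := fun x => |x| ^ (n + 1) * (Real.exp ((y + 2 * δ) * x) + Real.exp ((y - 2 * δ) * x)))
      (x₀ := y) (Metric.ball_mem_nhds y (by positivity : (0:ℝ) < 2 * δ))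
      (Filter.Eventually.of_forall fun t => hmeas t n)
      (habs y n (by simpa using hint 0 (by rw [abs_zero]; positivity) n))
      (hmeas y (n + 1)) ?_ ?_ ?_
  · exact key.2
  · refine Filter.Eventually.of_forall fun x => fun t ht => ?_
    rw [Real.norm_eq_abs, abs_mul, abs_pow, abs_of_nonneg (Real.exp_pos _).le]
    have hd : |t - y| < 2 * δ := by simpa [Metric.mem_ball, Real.dist_eq] using ht
    rw [abs_lt] at hd
    have hb : Real.exp (t * x) ≤ Real.exp ((y + 2 * δ) * x) + Real.exp ((y - 2 * δ) * x) := by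
      rcases le_or_gt 0 x with hx | hx
      · refine le_add_of_le_of_nonneg (Real.exp_le_exp.2 ?_) (Real.exp_pos _).le
        exact mul_le_mul_of_nonneg_right (by linarith) hx
      · refine le_add_of_nonneg_of_le (Real.exp_pos _).le (Real.exp_le_exp.2 ?_)
        nlinarith
    calc |x| ^ (n + 1) * Real.exp (t * x)
        ≤ |x| ^ (n + 1) * (Real.exp ((y + 2 * δ) * x) + Real.exp ((y - 2 * δ) * x)) := by
          gcongr
      _ = _ := rfl
  · have h1 := hint (2 * δ) (by rw [abs_of_nonneg (by positivity)]; linarith) (n + 1)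
    have h2 := hint (-(2 * δ)) (by rw [abs_neg, abs_of_nonneg (by positivity)]; linarith) (n + 1)
    have h1' : Integrable (fun x => |x| ^ (n + 1) * Real.exp ((y + 2 * δ) * x)) μ := h1
    have h2' : Integrable (fun x => |x| ^ (n + 1) * Real.exp ((y - 2 * δ) * x)) μ := by
      simpa [sub_eq_add_neg] using h2
    refine (h1'.add h2').congr (Filter.Eventually.of_forall fun x => ?_)
    simp [mul_add]
  · refine Filter.Eventually.of_forall fun x => fun t ht => ?_
    have h1 : HasDerivAt (fun t : ℝ => t * x) x t := hasDerivAt_mul_const x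
    have h2 := (h1.exp).const_mul (x ^ n)
    refine h2.congr_deriv ?_
    ring



lemma integral_pos_exp (μ : Measure ℝ) (hμ : μ ≠ 0) {l : ℝ} (hl : mgf' μ l ≠ ⊤) :
    0 < ∫ x, Real.exp (l * x) ∂μ := by
  rw [integral_pos_iff_support_of_nonneg (fun x => (Real.exp_pos _).le)
    (integrable_exp_of_mem μ hl)]
  have : (Function.support fun x : ℝ => Real.exp (l * x)) = Set.univ := by
    ext x; simp [Function.mem_support, Real.exp_ne_zero]
  rw [this]
  exact Measure.measure_univ_pos.mpr hμ

lemma toReal_mgf' (μ : Measure ℝ) {l : ℝ} (hl : mgf' μ l ≠ ⊤) :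
    (mgf' μ l).toReal = ∫ x, Real.exp (l * x) ∂μ := by
  have h := MeasureTheory.ofReal_integral_eq_lintegral_ofReal (integrable_exp_of_mem μ hl)
    (Filter.Eventually.of_forall fun x => (Real.exp_pos _).le)
  rw [show mgf' μ l = ∫⁻ x, ENNReal.ofReal (Real.exp (l * x)) ∂μ from rfl, ← h,
    ENNReal.toReal_ofReal (integral_nonneg fun x => (Real.exp_pos _).le)]

lemma integral_tilted'_eq (μ : Measure ℝ) (lam : ℝ) (g : ℝ → ℝ) :
    ∫ x, g x ∂(tilted' μ lam)
      = ∫ x, Real.exp (lam * x - logMgfReal μ lam) * g x ∂μ := by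
  have hmeas : Measurable fun x : ℝ => (Real.exp (lam * x - logMgfReal μ lam)).toNNReal :=
    (Real.measurable_exp.comp ((measurable_const.mul measurable_id).sub
      measurable_const)).real_toNNReal
  rw [show tilted' μ lam = μ.withDensity
      (fun x => ((Real.exp (lam * x - logMgfReal μ lam)).toNNReal : ℝ≥0∞)) from rfl,
    integral_withDensity_eq_integral_smul hmeas]
  congr 1
  ext x
  rw [NNReal.smul_def, Real.coe_toNNReal _ (Real.exp_pos _).le, smul_eq_mul]

theorem logMgf_second_deriv_variance_tilted (μ : Measure ℝ) (hμ : μ ≠ 0) (lam : ℝ)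
    (hlam : lam ∈ interior {l : ℝ | mgf' μ l ≠ ⊤}) :
    DifferentiableAt ℝ (logMgfReal μ) lam ∧
    HasDerivAt (deriv (logMgfReal μ))
      ((∫ x, x ^ 2 ∂(tilted' μ lam)) - (∫ x, x ∂(tilted' μ lam)) ^ 2) lam := by
  set S := {l : ℝ | mgf' μ l ≠ ⊤} with hSdef
  set G : ℝ → ℝ := fun l => ∫ x, Real.exp (l * x) ∂μ with hGdef
  set G1 : ℝ → ℝ := fun l => ∫ x, x * Real.exp (l * x) ∂μ with hG1def
  set G2 : ℝ → ℝ := fun l => ∫ x, x ^ 2 * Real.exp (l * x) ∂μ with hG2def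
  have hGpos : ∀ y ∈ interior S, 0 < G y := fun y hy =>
    integral_pos_exp μ hμ (interior_subset hy)
  have hG0 : ∀ y ∈ interior S, HasDerivAt G (G1 y) y := by
    intro y hy
    have h := hasDerivAt_integral_pow_exp μ hy 0
    simpa [hGdef, hG1def] using h
  have hG1' : ∀ y ∈ interior S, HasDerivAt G1 (G2 y) y := by
    intro y hy
    have h := hasDerivAt_integral_pow_exp μ hy 1
    simpa [hG1def, hG2def] using h
  have hψeq : ∀ y ∈ interior S, logMgfReal μ y = Real.log (G y) := by
    intro y hy
    rw [logMgfReal, toReal_mgf' μ (interior_subset hy)]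
  have hψ' : ∀ y ∈ interior S, HasDerivAt (logMgfReal μ) (G1 y / G y) y := by
    intro y hy
    have hlog := (hG0 y hy).log (ne_of_gt (hGpos y hy))
    refine hlog.congr_of_eventuallyEq ?_
    filter_upwards [isOpen_interior.mem_nhds hy] with z hz using hψeq z hz
  refine ⟨(hψ' lam hlam).differentiableAt, ?_⟩
  have hGne : G lam ≠ 0 := ne_of_gt (hGpos lam hlam)
  have hquot : HasDerivAt (fun y => G1 y / G y)
      ((G2 lam * G lam - G1 lam * G1 lam) / G lam ^ 2) lam :=
    (hG1' lam hlam).div (hG0 lam hlam) hGne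
  have hderiv_ev : deriv (logMgfReal μ) =ᶠ[nhds lam] fun y => G1 y / G y := by
    filter_upwards [isOpen_interior.mem_nhds hlam] with z hz using (hψ' z hz).deriv
  have hfinal := hquot.congr_of_eventuallyEq hderiv_ev
  -- compute tilted integrals
  have hexp : ∀ x : ℝ, Real.exp (lam * x - logMgfReal μ lam)
      = Real.exp (lam * x) * (G lam)⁻¹ := by
    intro x
    rw [Real.exp_sub, hψeq lam hlam, Real.exp_log (hGpos lam hlam), div_eq_mul_inv]
  have ht1 : (∫ x, x ∂(tilted' μ lam)) = G1 lam * (G lam)⁻¹ := by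
    rw [integral_tilted'_eq]
    have : ∀ x : ℝ, Real.exp (lam * x - logMgfReal μ lam) * x
        = x * Real.exp (lam * x) * (G lam)⁻¹ := by
      intro x; rw [hexp]; ring
    simp_rw [this]
    rw [integral_mul_const]
  have ht2 : (∫ x, x ^ 2 ∂(tilted' μ lam)) = G2 lam * (G lam)⁻¹ := by
    rw [integral_tilted'_eq]
    have : ∀ x : ℝ, Real.exp (lam * x - logMgfReal μ lam) * x ^ 2
        = x ^ 2 * Real.exp (lam * x) * (G lam)⁻¹ := by
      intro x; rw [hexp]; ring
    simp_rw [this]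
    rw [integral_mul_const]
  refine hfinal.congr_deriv ?_
  rw [ht1, ht2]
  field_simp
end

section
/- Let μ be a nonzero Borel measure on ℝ with logarithmic moment generating function ψ. Assume U := interior of {ψ < ∞} is nonempty, λ₊ := sup{λ : ψ(λ) < ∞} < ∞, and ψ(λ₊) < ∞. Then lim_{λ↑λ₊} ψ'(λ) = lim_{ε↓0} ε^{-1}(ψ(λ₊) − ψ(λ₊−ε)) = ∫ x μ_{λ₊}(dx), the mean of the tilted measure μ_{λ₊}(dx) = e^{λ₊x − ψ(λ₊)} μ(dx), with all three quantities in (−∞,∞]. -/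
open scoped ENNReal
open Filter MeasureTheory

/-! ### Auxiliary lemmas -/

section Aux

lemma aesm_exp (μ : Measure ℝ) (l : ℝ) :
    AEStronglyMeasurable (fun x => Real.exp (l * x)) μ :=
  (Real.continuous_exp.comp (continuous_const.mul continuous_id)).aestronglyMeasurable

lemma logMgfReal_eq (μ : Measure ℝ) (l : ℝ) :
    logMgfReal μ l = Real.log (∫ x, Real.exp (l * x) ∂μ) := by
  rw [logMgfReal, mgf', MeasureTheory.integral_eq_lintegral_of_nonneg_ae
    (Filter.Eventually.of_forall fun x => (Real.exp_pos _).le) (aesm_exp μ l)]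

lemma integrable_exp_of_ne_top (μ : Measure ℝ) (l : ℝ) (h : mgf' μ l ≠ ⊤) :
    Integrable (fun x => Real.exp (l * x)) μ := by
  refine ⟨aesm_exp μ l, ?_⟩
  rw [MeasureTheory.hasFiniteIntegral_iff_ofReal
    (Filter.Eventually.of_forall fun x => (Real.exp_pos _).le)]
  exact h.lt_top

lemma exp_le_add (a b l x : ℝ) (ha : a ≤ l) (hb : l ≤ b) :
    Real.exp (l * x) ≤ Real.exp (a * x) + Real.exp (b * x) := by
  rcases le_or_gt 0 x with hx | hx
  · have : l * x ≤ b * x := mul_le_mul_of_nonneg_right hb hx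
    have := Real.exp_le_exp.2 this
    nlinarith [Real.exp_pos (a * x)]
  · have : l * x ≤ a * x := mul_le_mul_of_nonpos_right ha hx.le
    have := Real.exp_le_exp.2 this
    nlinarith [Real.exp_pos (b * x)]

lemma mgf'_ne_top_of_mem (μ : Measure ℝ) {a b l : ℝ} (ha : mgf' μ a ≠ ⊤)
    (hb : mgf' μ b ≠ ⊤) (hl : l ∈ Set.Icc a b) : mgf' μ l ≠ ⊤ := by
  have : mgf' μ l ≤ mgf' μ a + mgf' μ b := by
    rw [mgf', mgf', mgf', ← MeasureTheory.lintegral_add_left (by fun_prop)]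
    refine MeasureTheory.lintegral_mono fun x => ?_
    rw [← ENNReal.ofReal_add (Real.exp_pos _).le (Real.exp_pos _).le]
    exact ENNReal.ofReal_le_ofReal (exp_le_add a b l x hl.1 hl.2)
  exact fun h => ((ENNReal.add_lt_top.2 ⟨ha.lt_top, hb.lt_top⟩).trans_le (h ▸ this : ⊤ ≤ _)).false

lemma abs_le_exp (ε x : ℝ) (hε : 0 < ε) : |x| ≤ ε⁻¹ * Real.exp (ε * |x|) := by
  have h := Real.add_one_le_exp (ε * |x|)
  have h2 : ε * |x| ≤ Real.exp (ε * |x|) := by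
    nlinarith [abs_nonneg x, mul_nonneg hε.le (abs_nonneg x)]
  have := mul_le_mul_of_nonneg_left h2 (inv_nonneg.2 hε.le)
  rwa [← mul_assoc, inv_mul_cancel₀ hε.ne', one_mul] at this

lemma abs_mul_exp_bound (a b l ε x : ℝ) (hε : 0 < ε) (ha : a ≤ l - ε) (hb : l + ε ≤ b) :
    |x * Real.exp (l * x)| ≤ ε⁻¹ * (Real.exp (a * x) + Real.exp (b * x)) := by
  rw [abs_mul, abs_of_pos (Real.exp_pos _)]
  have h1 : |x| * Real.exp (l * x) ≤ ε⁻¹ * Real.exp (ε * |x| + l * x) := by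
    rw [Real.exp_add, ← mul_assoc]
    exact mul_le_mul_of_nonneg_right (abs_le_exp ε x hε) (Real.exp_pos _).le
  refine h1.trans (mul_le_mul_of_nonneg_left ?_ (inv_nonneg.2 hε.le))
  rcases le_or_gt 0 x with hx | hx
  · have : ε * |x| + l * x = (l + ε) * x := by rw [abs_of_nonneg hx]; ring
    rw [this]
    have : (l + ε) * x ≤ b * x := mul_le_mul_of_nonneg_right hb hx
    nlinarith [Real.exp_le_exp.2 this, Real.exp_pos (a * x)]
  · have : ε * |x| + l * x = (l - ε) * x := by rw [abs_of_neg hx]; ring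
    rw [this]
    have : (l - ε) * x ≤ a * x := mul_le_mul_of_nonpos_right ha hx.le
    nlinarith [Real.exp_le_exp.2 this, Real.exp_pos (b * x)]

lemma negpart_mul_exp_bound (a l ε x : ℝ) (hε : 0 < ε) (ha : a + ε ≤ l) :
    max (-x) 0 * Real.exp (l * x) ≤ ε⁻¹ * Real.exp (a * x) := by
  rcases le_or_gt 0 x with hx | hx
  · rw [max_eq_right (by linarith), zero_mul]
    positivity
  · rw [max_eq_left (by linarith)]
    have h1 : -x ≤ ε⁻¹ * Real.exp (ε * -x) := by
      have := abs_le_exp ε x hε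
      rwa [abs_of_neg hx] at this
    have h2 : -x * Real.exp (l * x) ≤ ε⁻¹ * Real.exp (ε * -x) * Real.exp (l * x) :=
      mul_le_mul_of_nonneg_right h1 (Real.exp_pos _).le
    refine h2.trans ?_
    rw [mul_assoc, ← Real.exp_add]
    refine mul_le_mul_of_nonneg_left (Real.exp_le_exp.2 ?_) (inv_nonneg.2 hε.le)
    nlinarith

lemma pospart_mul_exp_bound (b l ε x : ℝ) (hε : 0 < ε) (hb : l + ε ≤ b) :
    max x 0 * Real.exp (l * x) ≤ ε⁻¹ * Real.exp (b * x) := by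
  have := negpart_mul_exp_bound (-b) (-l) ε (-x) hε (by linarith)
  simpa using this

lemma hasDerivAt_integral_exp (μ : Measure ℝ) {a b l : ℝ} (ha : mgf' μ a ≠ ⊤)
    (hb : mgf' μ b ≠ ⊤) (hal : a < l) (hlb : l < b) :
    Integrable (fun x => x * Real.exp (l * x)) μ ∧
    HasDerivAt (fun t => ∫ x, Real.exp (t * x) ∂μ) (∫ x, x * Real.exp (l * x) ∂μ) l := by
  set ε := min (l - a) (b - l) / 2 with hεdef
  have hε : 0 < ε := by
    have h1 : 0 < l - a := by linarith
    have h2 : 0 < b - l := by linarith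
    positivity
  have hεa : 2 * ε ≤ l - a := by
    have := min_le_left (l - a) (b - l); simp only [hεdef]; linarith
  have hεb : 2 * ε ≤ b - l := by
    have := min_le_right (l - a) (b - l); simp only [hεdef]; linarith
  have hmeas : ∀ᶠ t in nhds l, AEStronglyMeasurable (fun x => Real.exp (t * x)) μ :=
    Eventually.of_forall fun t => aesm_exp μ t
  have hint : Integrable (fun x => Real.exp (l * x)) μ :=
    integrable_exp_of_ne_top μ l (mgf'_ne_top_of_mem μ ha hb ⟨hal.le, hlb.le⟩)
  have h'meas : AEStronglyMeasurable (fun x => x * Real.exp (l * x)) μ :=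
    (continuous_id.mul
      (Real.continuous_exp.comp (continuous_const.mul continuous_id))).aestronglyMeasurable
  have hbound : ∀ᵐ x ∂μ, ∀ t ∈ Metric.ball l ε,
      ‖x * Real.exp (t * x)‖ ≤ ε⁻¹ * (Real.exp (a * x) + Real.exp (b * x)) := by
    refine Eventually.of_forall fun x t ht => ?_
    rw [Real.norm_eq_abs]
    have htl : |t - l| < ε := by rwa [Metric.mem_ball, Real.dist_eq] at ht
    rw [abs_lt] at htl
    exact abs_mul_exp_bound a b t ε x hε (by linarith) (by linarith)
  have hbint : Integrable (fun x => ε⁻¹ * (Real.exp (a * x) + Real.exp (b * x))) μ :=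
    (((integrable_exp_of_ne_top μ a ha).add (integrable_exp_of_ne_top μ b hb)).const_mul _)
  have hdiff : ∀ᵐ x ∂μ, ∀ t ∈ Metric.ball l ε,
      HasDerivAt (fun t => Real.exp (t * x)) (x * Real.exp (t * x)) t := by
    refine Eventually.of_forall fun x t _ => ?_
    have h1 : HasDerivAt (fun t : ℝ => t * x) x t := by simpa using (hasDerivAt_id t).mul_const x
    have := h1.exp
    simpa [mul_comm] using this
  exact hasDerivAt_integral_of_dominated_loc_of_deriv_le (Metric.ball_mem_nhds l hε) hmeas hint h'meas hbound hbint hdiff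

lemma integral_exp_pos' (μ : Measure ℝ) (hμ : μ ≠ 0) (l : ℝ)
    (h : Integrable (fun x => Real.exp (l * x)) μ) : 0 < ∫ x, Real.exp (l * x) ∂μ := by
  haveI : NeZero μ := ⟨hμ⟩
  exact integral_exp_pos h

lemma hasDerivAt_logMgfReal (μ : Measure ℝ) (hμ : μ ≠ 0) {a b l : ℝ} (ha : mgf' μ a ≠ ⊤)
    (hb : mgf' μ b ≠ ⊤) (hal : a < l) (hlb : l < b) :
    HasDerivAt (logMgfReal μ)
      ((∫ x, x * Real.exp (l * x) ∂μ) / (∫ x, Real.exp (l * x) ∂μ)) l := by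
  have hφ := (hasDerivAt_integral_exp μ ha hb hal hlb).2
  have hpos : 0 < ∫ x, Real.exp (l * x) ∂μ :=
    integral_exp_pos' μ hμ l
      (integrable_exp_of_ne_top μ l (mgf'_ne_top_of_mem μ ha hb ⟨hal.le, hlb.le⟩))
  have := hφ.log hpos.ne'
  have heq : logMgfReal μ = fun t => Real.log (∫ x, Real.exp (t * x) ∂μ) :=
    funext fun t => logMgfReal_eq μ t
  rw [heq]
  exact this

lemma tendsto_exp_aux (x lp : ℝ) :
    Tendsto (fun l => Real.exp (l * x)) (nhdsWithin lp (Set.Iio lp)) (nhds (Real.exp (lp * x))) :=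
  ((Real.continuous_exp.comp (continuous_id.mul continuous_const)).tendsto lp).mono_left
    nhdsWithin_le_nhds

lemma tendsto_phi (μ : Measure ℝ) {l0 lp : ℝ} (h0 : mgf' μ l0 ≠ ⊤) (hp : mgf' μ lp ≠ ⊤)
    (hlt : l0 < lp) :
    Tendsto (fun l => ∫ x, Real.exp (l * x) ∂μ) (nhdsWithin lp (Set.Iio lp))
      (nhds (∫ x, Real.exp (lp * x) ∂μ)) := by
  refine tendsto_integral_filter_of_dominated_convergence
    (fun x => Real.exp (l0 * x) + Real.exp (lp * x))
    (Eventually.of_forall fun l => aesm_exp μ l) ?_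
    ((integrable_exp_of_ne_top μ l0 h0).add (integrable_exp_of_ne_top μ lp hp))
    (Eventually.of_forall fun x => tendsto_exp_aux x lp)
  · filter_upwards [Ioo_mem_nhdsLT_of_mem (Set.mem_Ioc.2 ⟨hlt, le_refl lp⟩)] with l hl
    refine Eventually.of_forall fun x => ?_
    rw [Real.norm_eq_abs, abs_of_pos (Real.exp_pos _)]
    exact exp_le_add l0 lp l x hl.1.le hl.2.le

lemma tendsto_negpart (μ : Measure ℝ) {l0 lp : ℝ} (h0 : mgf' μ l0 ≠ ⊤) (hlt : l0 < lp) :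
    Tendsto (fun l => ∫ x, max (-x) 0 * Real.exp (l * x) ∂μ) (nhdsWithin lp (Set.Iio lp))
      (nhds (∫ x, max (-x) 0 * Real.exp (lp * x) ∂μ)) := by
  set ε := (lp - l0) / 2 with hεdef
  have hε : 0 < ε := by simp only [hεdef]; linarith
  refine tendsto_integral_filter_of_dominated_convergence
    (fun x => ε⁻¹ * Real.exp (l0 * x))
    (Eventually.of_forall fun l =>
      (((continuous_neg.max continuous_const).mul
        (Real.continuous_exp.comp (continuous_const.mul continuous_id))).aestronglyMeasurable)) ?_
    ((integrable_exp_of_ne_top μ l0 h0).const_mul _)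
    (Eventually.of_forall fun x =>
      (tendsto_const_nhds.mul (tendsto_exp_aux x lp)))
  · filter_upwards [Ioo_mem_nhdsLT_of_mem
      (Set.mem_Ioc.2 ⟨(by linarith : l0 + ε < lp), le_refl lp⟩)] with l hl
    refine Eventually.of_forall fun x => ?_
    rw [Real.norm_eq_abs, abs_of_nonneg (mul_nonneg (le_max_right _ _) (Real.exp_pos _).le)]
    exact negpart_mul_exp_bound l0 l ε x hε hl.1.le

lemma integrable_negpart (μ : Measure ℝ) {l0 : ℝ} (h0 : mgf' μ l0 ≠ ⊤) (l : ℝ) (hl : l0 < l) :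
    Integrable (fun x => max (-x) 0 * Real.exp (l * x)) μ := by
  have hm : AEStronglyMeasurable (fun x => max (-x) 0 * Real.exp (l * x)) μ :=
    ((continuous_neg.max continuous_const).mul
      (Real.continuous_exp.comp (continuous_const.mul continuous_id))).aestronglyMeasurable
  refine Integrable.mono ((integrable_exp_of_ne_top μ l0 h0).const_mul (l - l0)⁻¹) hm ?_
  refine Eventually.of_forall fun x => ?_
  rw [Real.norm_eq_abs, Real.norm_eq_abs,
    abs_of_nonneg (mul_nonneg (le_max_right _ _) (Real.exp_pos _).le)]
  refine (negpart_mul_exp_bound l0 l (l - l0) x (by linarith) (by linarith)).trans ?_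
  rw [abs_of_pos (mul_pos (by simp; linarith) (Real.exp_pos _))]

noncomputable def Al (μ : Measure ℝ) (l : ℝ) : ℝ≥0∞ :=
  ∫⁻ x, ENNReal.ofReal (max x 0 * Real.exp (l * x)) ∂μ

noncomputable def Bl (μ : Measure ℝ) (l : ℝ) : ℝ≥0∞ :=
  ∫⁻ x, ENNReal.ofReal (max (-x) 0 * Real.exp (l * x)) ∂μ

lemma cont_pospart (l : ℝ) : Continuous (fun x => max x 0 * Real.exp (l * x)) :=
  (continuous_id.max continuous_const).mul
    (Real.continuous_exp.comp (continuous_const.mul continuous_id))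

lemma pospart_mono (x : ℝ) : Monotone (fun l => max x 0 * Real.exp (l * x)) := by
  intro l1 l2 h
  rcases le_or_gt x 0 with hx | hx
  · simp [max_eq_right hx]
  · exact mul_le_mul_of_nonneg_left (Real.exp_le_exp.2 (mul_le_mul_of_nonneg_right h hx.le))
      (le_max_right _ _)

lemma Al_mono (μ : Measure ℝ) : Monotone (Al μ) := fun _ _ h =>
  lintegral_mono fun x => ENNReal.ofReal_le_ofReal (pospart_mono x h)

lemma Al_ne_top (μ : Measure ℝ) {lp l : ℝ} (hp : mgf' μ lp ≠ ⊤) (h : l < lp) :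
    Al μ l ≠ ⊤ := by
  have hb : ∀ x, max x 0 * Real.exp (l * x) ≤ (lp - l)⁻¹ * Real.exp (lp * x) :=
    fun x => pospart_mul_exp_bound lp l (lp - l) x (by linarith) (by linarith)
  have : Al μ l ≤ ∫⁻ x, ENNReal.ofReal ((lp - l)⁻¹ * Real.exp (lp * x)) ∂μ :=
    lintegral_mono fun x => ENNReal.ofReal_le_ofReal (hb x)
  refine ne_top_of_le_ne_top ?_ this
  rw [show (fun x => ENNReal.ofReal ((lp - l)⁻¹ * Real.exp (lp * x)))
      = fun x => ENNReal.ofReal (lp - l)⁻¹ * ENNReal.ofReal (Real.exp (lp * x)) from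
      funext fun x => ENNReal.ofReal_mul (inv_nonneg.2 (by linarith)),
    lintegral_const_mul' _ _ ENNReal.ofReal_ne_top]
  exact ENNReal.mul_ne_top ENNReal.ofReal_ne_top hp

lemma cont_pospart' (x : ℝ) : Continuous (fun l => max x 0 * Real.exp (l * x)) :=
  continuous_const.mul (Real.continuous_exp.comp (continuous_id.mul continuous_const))

lemma tendsto_Al (μ : Measure ℝ) (lp : ℝ) :
    Tendsto (Al μ) (nhdsWithin lp (Set.Iio lp)) (nhds (Al μ lp)) := by
  have h := (Al_mono μ).tendsto_nhdsLT lp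
  have hsup : sSup (Al μ '' Set.Iio lp) = Al μ lp := by
    apply le_antisymm
    · exact sSup_le fun y ⟨l, hl, hy⟩ => hy ▸ Al_mono μ hl.le
    · set s : ℕ → ℝ := fun n => lp - (n + 1 : ℝ)⁻¹ with hs
      have hslt : ∀ n, s n < lp := fun n => by
        simp only [hs]
        have : (0:ℝ) < (n + 1 : ℝ)⁻¹ := by positivity
        linarith
      have hstend : Tendsto s atTop (nhds lp) := by
        have : Tendsto (fun n : ℕ => (n + 1 : ℝ)⁻¹) atTop (nhds 0) :=
          tendsto_one_div_add_atTop_nhds_zero_nat.congr fun n => by rw [one_div]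
        simpa [hs] using tendsto_const_nhds.sub this
      have hkey : Tendsto (fun n => Al μ (s n)) atTop (nhds (Al μ lp)) := by
        refine lintegral_tendsto_of_tendsto_of_monotone
          (fun n => (ENNReal.continuous_ofReal.comp (cont_pospart (s n))).measurable.aemeasurable)
          (Eventually.of_forall fun x n m hnm => ?_)
          (Eventually.of_forall fun x => ?_)
        · refine ENNReal.ofReal_le_ofReal (pospart_mono x ?_)
          simp only [hs]
          have : (m + 1 : ℝ)⁻¹ ≤ (n + 1 : ℝ)⁻¹ := by
            apply inv_anti₀ (by positivity)
            exact_mod_cast by omega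
          linarith
        · exact (ENNReal.continuous_ofReal.tendsto _).comp
            (((cont_pospart' x).tendsto lp).comp hstend)
      exact le_of_tendsto hkey (Eventually.of_forall fun n =>
        le_sSup ⟨s n, hslt n, rfl⟩)
  rwa [hsup] at h

lemma Ar_eq (μ : Measure ℝ) (l : ℝ) :
    ∫ x, max x 0 * Real.exp (l * x) ∂μ = (Al μ l).toReal := by
  rw [Al, MeasureTheory.integral_eq_lintegral_of_nonneg_ae
    (Eventually.of_forall fun x => mul_nonneg (le_max_right _ _) (Real.exp_pos _).le)
    (cont_pospart l).aestronglyMeasurable]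

lemma integrable_pospart (μ : Measure ℝ) {l : ℝ} (h : Al μ l ≠ ⊤) :
    Integrable (fun x => max x 0 * Real.exp (l * x)) μ := by
  refine ⟨(cont_pospart l).aestronglyMeasurable, ?_⟩
  rw [MeasureTheory.hasFiniteIntegral_iff_ofReal
    (Eventually.of_forall fun x => mul_nonneg (le_max_right _ _) (Real.exp_pos _).le)]
  exact h.lt_top

lemma tendsto_Ar (μ : Measure ℝ) {lp : ℝ} (hfin : Al μ lp ≠ ⊤) :
    Tendsto (fun l => ∫ x, max x 0 * Real.exp (l * x) ∂μ) (nhdsWithin lp (Set.Iio lp))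
      (nhds (∫ x, max x 0 * Real.exp (lp * x) ∂μ)) := by
  have h := (ENNReal.tendsto_toReal hfin).comp (tendsto_Al μ lp)
  rw [show (fun l => ∫ x, max x 0 * Real.exp (l * x) ∂μ)
      = fun l => (Al μ l).toReal from funext fun l => Ar_eq μ l, Ar_eq μ lp]
  exact h

lemma tendsto_Ar_top (μ : Measure ℝ) {lp : ℝ} (hp : mgf' μ lp ≠ ⊤) (htop : Al μ lp = ⊤) :
    Tendsto (fun l => ∫ x, max x 0 * Real.exp (l * x) ∂μ) (nhdsWithin lp (Set.Iio lp)) atTop := by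
  rw [tendsto_atTop]
  intro C
  have h1 : ∀ᶠ l in nhdsWithin lp (Set.Iio lp), ENNReal.ofReal C < Al μ l := by
    refine (tendsto_Al μ lp).eventually ?_
    refine eventually_of_mem (isOpen_Ioi.mem_nhds ?_) fun y hy => hy
    rw [htop]; exact ENNReal.ofReal_lt_top
  filter_upwards [h1, self_mem_nhdsWithin] with l hl hl2
  rw [Ar_eq]
  exact ((ENNReal.ofReal_le_iff_le_toReal (Al_ne_top μ hp hl2)).1 hl.le)

lemma tendsto_coe_atTop_ereal : Tendsto (fun x : ℝ => (x : EReal)) atTop (nhds ⊤) := by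
  have h : Tendsto Real.toEReal atTop (nhdsWithin (⊤ : EReal) {(⊤:EReal)}ᶜ) := by
    rw [EReal.nhdsWithin_top]; exact tendsto_map
  exact h.mono_right nhdsWithin_le_nhds

lemma coe_ennreal_eq_toReal {a : ℝ≥0∞} (h : a ≠ ⊤) : (a : EReal) = ((a.toReal : ℝ) : EReal) := by
  conv_lhs => rw [← ENNReal.ofReal_toReal h]
  rw [EReal.coe_ennreal_ofReal, max_eq_left ENNReal.toReal_nonneg]

lemma ofReal_aux (E c y : ℝ) (hc : 0 ≤ c) :
    ENNReal.ofReal (E * c) * ENNReal.ofReal y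
      = ENNReal.ofReal (max y 0 * E) * ENNReal.ofReal c := by
  rcases le_or_gt y 0 with hy | hy
  · rw [ENNReal.ofReal_eq_zero.2 hy, max_eq_right hy, zero_mul, ENNReal.ofReal_zero,
      zero_mul, mul_zero]
  · rcases le_or_gt 0 E with hE | hE
    · rw [max_eq_left hy.le, ← ENNReal.ofReal_mul (mul_nonneg hE hc),
        ← ENNReal.ofReal_mul (mul_nonneg hy.le hE)]
      congr 1
      ring
    · rw [max_eq_left hy.le, ENNReal.ofReal_eq_zero.2 (mul_nonpos_iff.2 (Or.inr ⟨hE.le, hc⟩)),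
        ENNReal.ofReal_eq_zero.2 (mul_nonpos_iff.2 (Or.inl ⟨hy.le, hE.le⟩)), zero_mul, zero_mul]

lemma density_eq (μ : Measure ℝ) (lp : ℝ) (hpos : 0 < ∫ x, Real.exp (lp * x) ∂μ) (x : ℝ) :
    Real.exp (lp * x - logMgfReal μ lp)
      = Real.exp (lp * x) * (∫ x, Real.exp (lp * x) ∂μ)⁻¹ := by
  rw [logMgfReal_eq, Real.exp_sub, Real.exp_log hpos, div_eq_mul_inv]

lemma tilted_lintegral_pos (μ : Measure ℝ) (lp : ℝ)
    (hpos : 0 < ∫ x, Real.exp (lp * x) ∂μ) :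
    (∫⁻ x, ENNReal.ofReal x ∂(tilted' μ lp))
      = Al μ lp * ENNReal.ofReal (∫ x, Real.exp (lp * x) ∂μ)⁻¹ := by
  set φ := ∫ x, Real.exp (lp * x) ∂μ with hφ
  rw [tilted', lintegral_withDensity_eq_lintegral_mul μ
    (f := fun x => ENNReal.ofReal (Real.exp (lp * x - logMgfReal μ lp))) (by fun_prop)
    ENNReal.measurable_ofReal]
  have heq : ∀ x, ENNReal.ofReal (Real.exp (lp * x - logMgfReal μ lp)) * ENNReal.ofReal x
      = ENNReal.ofReal (max x 0 * Real.exp (lp * x)) * ENNReal.ofReal φ⁻¹ := by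
    intro x
    rw [density_eq μ lp hpos x]
    exact ofReal_aux (Real.exp (lp * x)) φ⁻¹ x (inv_nonneg.2 hpos.le)
  simp only [Pi.mul_apply]
  rw [show (fun x => ENNReal.ofReal (Real.exp (lp * x - logMgfReal μ lp)) * ENNReal.ofReal x)
      = fun x => ENNReal.ofReal (max x 0 * Real.exp (lp * x)) * ENNReal.ofReal φ⁻¹ from
      funext heq]
  rw [lintegral_mul_const' _ _ ENNReal.ofReal_ne_top, Al]

lemma tilted_lintegral_neg (μ : Measure ℝ) (lp : ℝ)
    (hpos : 0 < ∫ x, Real.exp (lp * x) ∂μ) :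
    (∫⁻ x, ENNReal.ofReal (-x) ∂(tilted' μ lp))
      = Bl μ lp * ENNReal.ofReal (∫ x, Real.exp (lp * x) ∂μ)⁻¹ := by
  set φ := ∫ x, Real.exp (lp * x) ∂μ with hφ
  rw [tilted', lintegral_withDensity_eq_lintegral_mul μ
    (f := fun x => ENNReal.ofReal (Real.exp (lp * x - logMgfReal μ lp))) (by fun_prop)
    (g := fun x => ENNReal.ofReal (-x)) (by fun_prop)]
  have heq : ∀ x, ENNReal.ofReal (Real.exp (lp * x - logMgfReal μ lp)) * ENNReal.ofReal (-x)
      = ENNReal.ofReal (max (-x) 0 * Real.exp (lp * x)) * ENNReal.ofReal φ⁻¹ := by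
    intro x
    rw [density_eq μ lp hpos x]
    exact ofReal_aux (Real.exp (lp * x)) φ⁻¹ (-x) (inv_nonneg.2 hpos.le)
  simp only [Pi.mul_apply]
  rw [show (fun x => ENNReal.ofReal (Real.exp (lp * x - logMgfReal μ lp)) * ENNReal.ofReal (-x))
      = fun x => ENNReal.ofReal (max (-x) 0 * Real.exp (lp * x)) * ENNReal.ofReal φ⁻¹ from
      funext heq]
  rw [lintegral_mul_const' _ _ ENNReal.ofReal_ne_top, Bl]

lemma Br_eq (μ : Measure ℝ) (l : ℝ) :
    ∫ x, max (-x) 0 * Real.exp (l * x) ∂μ = (Bl μ l).toReal := by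
  rw [Bl, MeasureTheory.integral_eq_lintegral_of_nonneg_ae
    (Eventually.of_forall fun x => mul_nonneg (le_max_right _ _) (Real.exp_pos _).le)
    (Continuous.aestronglyMeasurable (by continuity))]

lemma Bl_ne_top (μ : Measure ℝ) {l : ℝ}
    (h : Integrable (fun x => max (-x) 0 * Real.exp (l * x)) μ) : Bl μ l ≠ ⊤ := by
  have := h.2
  rw [MeasureTheory.hasFiniteIntegral_iff_ofReal
    (Eventually.of_forall fun x => mul_nonneg (le_max_right _ _) (Real.exp_pos _).le)] at this
  exact this.ne

end Aux

theorem logMgf_one_sided_derivative (μ : Measure ℝ) (hμ : μ ≠ 0)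
    (hU : (interior {l : ℝ | mgf' μ l ≠ ⊤}).Nonempty)
    (hbdd : BddAbove {l : ℝ | mgf' μ l ≠ ⊤})
    (lp : ℝ) (hlp : lp = sSup {l : ℝ | mgf' μ l ≠ ⊤})
    (hfin : mgf' μ lp ≠ ⊤) :
    ∃ m : EReal,
      Tendsto (fun l : ℝ => ((deriv (logMgfReal μ) l : ℝ) : EReal))
        (nhdsWithin lp (Set.Iio lp)) (nhds m) ∧
      Tendsto (fun e : ℝ => (((logMgfReal μ lp - logMgfReal μ (lp - e)) / e : ℝ) : EReal))
        (nhdsWithin 0 (Set.Ioi 0)) (nhds m) ∧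
      (∫⁻ x, ENNReal.ofReal (-x) ∂(tilted' μ lp)) ≠ ⊤ ∧
      m = ((∫⁻ x, ENNReal.ofReal x ∂(tilted' μ lp) : ℝ≥0∞) : EReal)
            - (((∫⁻ x, ENNReal.ofReal (-x) ∂(tilted' μ lp)).toReal : ℝ) : EReal) := by
  classical
  -- choose an interior point `l0 < lp`
  obtain ⟨l0, hl0i⟩ := hU
  have h0 : mgf' μ l0 ≠ ⊤ := interior_subset hl0i
  obtain ⟨ε₀, hε₀, hball⟩ := Metric.isOpen_iff.1 isOpen_interior l0 hl0i
  have hmem : l0 + ε₀ / 2 ∈ {l : ℝ | mgf' μ l ≠ ⊤} := by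
    refine interior_subset (hball ?_)
    rw [Metric.mem_ball, Real.dist_eq]
    rw [abs_of_pos (by linarith)]
    linarith
  have hl0lt : l0 < lp := by
    have : l0 + ε₀ / 2 ≤ lp := hlp ▸ le_csSup hbdd hmem
    linarith
  have hp : mgf' μ lp ≠ ⊤ := hfin
  -- notation
  set φf : ℝ → ℝ := fun l => ∫ x, Real.exp (l * x) ∂μ with hφf
  set Arf : ℝ → ℝ := fun l => ∫ x, max x 0 * Real.exp (l * x) ∂μ with hArf
  set Brf : ℝ → ℝ := fun l => ∫ x, max (-x) 0 * Real.exp (l * x) ∂μ with hBrf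
  set f' : ℝ → ℝ := fun l => (∫ x, x * Real.exp (l * x) ∂μ) / φf l with hf'
  have hφppos : 0 < φf lp := integral_exp_pos' μ hμ lp (integrable_exp_of_ne_top μ lp hp)
  have hderiv : ∀ l ∈ Set.Ioo l0 lp, HasDerivAt (logMgfReal μ) (f' l) l := fun l hl =>
    hasDerivAt_logMgfReal μ hμ h0 hp hl.1 hl.2
  have hNum : ∀ l ∈ Set.Ioo l0 lp,
      (∫ x, x * Real.exp (l * x) ∂μ) = Arf l - Brf l := by
    intro l hl
    have h1 := integrable_pospart μ (Al_ne_top μ hp hl.2)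
    have h2 := integrable_negpart μ h0 l hl.1
    have h3 := integral_sub h1 h2
    rw [hArf, hBrf]
    rw [← h3]
    congr 1
    funext x
    rcases le_total 0 x with hx | hx
    · rw [max_eq_left hx, max_eq_right (by linarith)]; ring
    · rw [max_eq_right hx, max_eq_left (by linarith)]; ring
  have hIooMem : Set.Ioo l0 lp ∈ nhdsWithin lp (Set.Iio lp) :=
    Ioo_mem_nhdsLT_of_mem (Set.mem_Ioc.2 ⟨hl0lt, le_refl lp⟩)
  -- the mean of the tilted measure, and the limit of the derivative
  have key : ∃ m : EReal,
      Tendsto (fun l : ℝ => ((deriv (logMgfReal μ) l : ℝ) : EReal))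
        (nhdsWithin lp (Set.Iio lp)) (nhds m) ∧
      m = ((∫⁻ x, ENNReal.ofReal x ∂(tilted' μ lp) : ℝ≥0∞) : EReal)
            - (((∫⁻ x, ENNReal.ofReal (-x) ∂(tilted' μ lp)).toReal : ℝ) : EReal) := by
    have hTpos := tilted_lintegral_pos μ lp hφppos
    have hTneg := tilted_lintegral_neg μ lp hφppos
    have hBfin : Bl μ lp ≠ ⊤ := Bl_ne_top μ (integrable_negpart μ h0 lp hl0lt)
    have hcne : ENNReal.ofReal (φf lp)⁻¹ ≠ ⊤ := ENNReal.ofReal_ne_top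
    have hTnegfin : (∫⁻ x, ENNReal.ofReal (-x) ∂(tilted' μ lp)) ≠ ⊤ := by
      rw [hTneg]; exact ENNReal.mul_ne_top hBfin hcne
    have hTnegToReal : (∫⁻ x, ENNReal.ofReal (-x) ∂(tilted' μ lp)).toReal
        = Brf lp * (φf lp)⁻¹ := by
      rw [hTneg, ENNReal.toReal_mul, ENNReal.toReal_ofReal (inv_nonneg.2 hφppos.le),
        hBrf]
      simp only []
      rw [Br_eq]
    have hφinv : Tendsto (fun l => (φf l)⁻¹) (nhdsWithin lp (Set.Iio lp))
        (nhds ((φf lp)⁻¹)) := (tendsto_phi μ h0 hp hl0lt).inv₀ hφppos.ne'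
    have hBtend : Tendsto Brf (nhdsWithin lp (Set.Iio lp)) (nhds (Brf lp)) :=
      tendsto_negpart μ h0 hl0lt
    by_cases htop : Al μ lp = ⊤
    · refine ⟨⊤, ?_, ?_⟩
      · -- derivative tends to +∞
        have hAtop : Tendsto Arf (nhdsWithin lp (Set.Iio lp)) atTop :=
          tendsto_Ar_top μ hp htop
        have hMtop : Tendsto (fun l => ∫ x, x * Real.exp (l * x) ∂μ)
            (nhdsWithin lp (Set.Iio lp)) atTop := by
          have h1 : Tendsto (fun l => Arf l + -Brf l) (nhdsWithin lp (Set.Iio lp)) atTop :=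
            hAtop.atTop_add hBtend.neg
          refine h1.congr' ?_
          filter_upwards [hIooMem] with l hl
          rw [hNum l hl]; ring
        have hf'top : Tendsto f' (nhdsWithin lp (Set.Iio lp)) atTop := by
          have h1 : Tendsto (fun l => (∫ x, x * Real.exp (l * x) ∂μ) * (φf l)⁻¹)
              (nhdsWithin lp (Set.Iio lp)) atTop :=
            hMtop.atTop_mul_pos (inv_pos.2 hφppos) hφinv
          refine h1.congr fun l => ?_
          simp only [hf', div_eq_mul_inv]
        have h2 : Tendsto (fun l : ℝ => ((f' l : ℝ) : EReal)) (nhdsWithin lp (Set.Iio lp))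
            (nhds ⊤) := tendsto_coe_atTop_ereal.comp hf'top
        refine h2.congr' ?_
        filter_upwards [hIooMem] with l hl
        rw [(hderiv l hl).deriv]
      · -- m = ⊤
        rw [hTpos, htop, ENNReal.top_mul
          (ENNReal.ofReal_pos.2 (inv_pos.2 hφppos)).ne', EReal.coe_ennreal_top,
          EReal.top_sub_coe]
    · refine ⟨(((Arf lp - Brf lp) / φf lp : ℝ) : EReal), ?_, ?_⟩
      · have hAtend : Tendsto Arf (nhdsWithin lp (Set.Iio lp)) (nhds (Arf lp)) :=
          tendsto_Ar μ htop
        have hMtend : Tendsto (fun l => ∫ x, x * Real.exp (l * x) ∂μ)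
            (nhdsWithin lp (Set.Iio lp)) (nhds (Arf lp - Brf lp)) := by
          refine (hAtend.sub hBtend).congr' ?_
          filter_upwards [hIooMem] with l hl
          rw [hNum l hl]
        have hf'tend : Tendsto f' (nhdsWithin lp (Set.Iio lp))
            (nhds ((Arf lp - Brf lp) / φf lp)) := hMtend.div (tendsto_phi μ h0 hp hl0lt)
          hφppos.ne'
        have h2 := EReal.tendsto_coe.2 hf'tend
        refine h2.congr' ?_
        filter_upwards [hIooMem] with l hl
        rw [(hderiv l hl).deriv]
      · -- m = mean
        have hTposfin : (∫⁻ x, ENNReal.ofReal x ∂(tilted' μ lp)) ≠ ⊤ := by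
          rw [hTpos]; exact ENNReal.mul_ne_top htop hcne
        rw [coe_ennreal_eq_toReal hTposfin, ← EReal.coe_sub, EReal.coe_eq_coe_iff]
        have hTposToReal : (∫⁻ x, ENNReal.ofReal x ∂(tilted' μ lp)).toReal
            = Arf lp * (φf lp)⁻¹ := by
          rw [hTpos, ENNReal.toReal_mul, ENNReal.toReal_ofReal (inv_nonneg.2 hφppos.le), hArf]
          simp only []
          rw [Ar_eq]
        rw [hTposToReal, hTnegToReal]
        field_simp
  obtain ⟨m, h1, hmeq⟩ := key
  -- difference quotients via the mean value theorem
  have h2 : Tendsto (fun e : ℝ => (((logMgfReal μ lp - logMgfReal μ (lp - e)) / e : ℝ) : EReal))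
      (nhdsWithin 0 (Set.Ioi 0)) (nhds m) := by
    set δ : ℝ := (lp - l0) / 2 with hδdef
    have hδ : 0 < δ := by simp only [hδdef]; linarith
    have hcontlp : ContinuousWithinAt (logMgfReal μ) (Set.Iic lp) lp := by
      have hIic : Set.Iio lp ∪ {lp} = Set.Iic lp := Set.Iio_union_right
      have hphi_tend : Tendsto φf (nhdsWithin lp (Set.Iic lp)) (nhds (φf lp)) := by
        rw [← hIic, nhdsWithin_union, tendsto_sup]
        exact ⟨tendsto_phi μ h0 hp hl0lt, by
          rw [nhdsWithin_singleton]; exact tendsto_pure_nhds φf lp⟩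
      have hlog := (Real.continuousAt_log hφppos.ne').tendsto.comp hphi_tend
      have : Tendsto (logMgfReal μ) (nhdsWithin lp (Set.Iic lp))
          (nhds (Real.log (φf lp))) := by
        refine hlog.congr fun y => ?_
        rw [Function.comp_apply, ← logMgfReal_eq]
      rw [ContinuousWithinAt, logMgfReal_eq]
      exact this
    have hP : ∀ e : ℝ, 0 < e → e < δ → ∃ c, c ∈ Set.Ioo (lp - e) lp ∧
        deriv (logMgfReal μ) c = (logMgfReal μ lp - logMgfReal μ (lp - e)) / e := by
      intro e he1 he2
      have hab : lp - e < lp := by linarith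
      have hsub : ∀ y ∈ Set.Ioo (lp - e) lp, y ∈ Set.Ioo l0 lp := by
        intro y hy
        exact ⟨by simp only [hδdef] at he2; linarith [hy.1], hy.2⟩
      have hcont : ContinuousOn (logMgfReal μ) (Set.Icc (lp - e) lp) := by
        intro y hy
        rcases eq_or_lt_of_le hy.2 with h | h
        · rw [h]
          exact hcontlp.mono fun z hz => hz.2
        · exact ((hderiv y ⟨by simp only [hδdef] at he2; linarith [hy.1], h⟩).continuousAt
            ).continuousWithinAt
      obtain ⟨c, hc, hceq⟩ := exists_hasDerivAt_eq_slope (logMgfReal μ) f' hab hcont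
        (fun x hx => hderiv x (hsub x hx))
      refine ⟨c, hc, ?_⟩
      rw [(hderiv c (hsub c hc)).deriv, hceq, sub_sub_cancel]
    set ξ : ℝ → ℝ := fun e => if h : ∃ c, c ∈ Set.Ioo (lp - e) lp ∧
        deriv (logMgfReal μ) c = (logMgfReal μ lp - logMgfReal μ (lp - e)) / e
      then h.choose else lp with hξdef
    have hspec : ∀ e : ℝ, 0 < e → e < δ → ξ e ∈ Set.Ioo (lp - e) lp ∧
        deriv (logMgfReal μ) (ξ e) = (logMgfReal μ lp - logMgfReal μ (lp - e)) / e := by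
      intro e he1 he2
      have hPe := hP e he1 he2
      simp only [hξdef, dif_pos hPe]
      exact hPe.choose_spec
    have hIooMem0 : Set.Ioo (0:ℝ) δ ∈ nhdsWithin (0:ℝ) (Set.Ioi 0) :=
      Ioo_mem_nhdsGT_of_mem (Set.mem_Ico.2 ⟨le_refl 0, hδ⟩)
    have htendξ : Tendsto ξ (nhdsWithin 0 (Set.Ioi 0)) (nhdsWithin lp (Set.Iio lp)) := by
      rw [tendsto_nhdsWithin_iff]
      constructor
      · refine tendsto_of_tendsto_of_tendsto_of_le_of_le' (g := fun e : ℝ => lp - e)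
          (h := fun _ : ℝ => lp) ?_ tendsto_const_nhds ?_ ?_
        · have : Tendsto (fun e : ℝ => lp - e) (nhds 0) (nhds (lp - 0)) :=
            tendsto_const_nhds.sub tendsto_id
          simpa using this.mono_left nhdsWithin_le_nhds
        · filter_upwards [hIooMem0] with e he
          exact (hspec e he.1 he.2).1.1.le
        · filter_upwards [hIooMem0] with e he
          exact (hspec e he.1 he.2).1.2.le
      · filter_upwards [hIooMem0] with e he
        exact (hspec e he.1 he.2).1.2
    have hcomp := h1.comp htendξ
    refine hcomp.congr' ?_
    filter_upwards [hIooMem0] with e he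
    rw [Function.comp_apply, (hspec e he.1 he.2).2]
  -- negative part is finite
  have hneg : (∫⁻ x, ENNReal.ofReal (-x) ∂(tilted' μ lp)) ≠ ⊤ := by
    rw [tilted_lintegral_neg μ lp hφppos]
    exact ENNReal.mul_ne_top (Bl_ne_top μ (integrable_negpart μ h0 lp hl0lt))
      ENNReal.ofReal_ne_top
  exact ⟨m, h1, h2, hneg, hmeq⟩
end

section
/- Let A be an irreducible nonnegative matrix on countable S with ρ(A) < ∞, and set λ* := −log ρ(A). Fix z ∈ S and let ψ_z be the excursion logarithmic moment generating function at z. If A is R-transient, i.e., Σ_{n≥1} ρ(A)^{-n} A^n(z,z) < ∞, then ψ_z(λ*) < 0. If A is R-recurrent, i.e., Σ_{n≥1} ρ(A)^{-n} A^n(z,z) = ∞, then ψ_z(λ*) = 0. -/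
open scoped ENNReal
open Filter

variable {S : Type*}

/-- Weight of a walk, given as the list of its successive vertices:
the product of the matrix entries along consecutive pairs. -/
noncomputable def chainWeight (A : S → S → ℝ≥0∞) : List S → ℝ≥0∞
  | [] => 1
  | [_] => 1
  | a :: b :: t => A a b * chainWeight A (b :: t)

/-- Excursions away from `z`: walks `z :: l ++ [z]` of length `l.length + 1 ≥ 1`
from `z` to `z` (through edges of the graph of `A`) avoiding `z` at intermediate times.
An excursion is encoded by the list `l` of its intermediate vertices. -/
def ExcAvoid (A : S → S → ℝ≥0∞) (z : S) : Set (List S) :=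
  {l | List.Chain (fun a b => 0 < A a b) z (l ++ [z]) ∧ ∀ v ∈ l, v ≠ z}

/-- The moment generating function `φ_z(λ) = Σ_{ω excursion away from z} e^{λ ℓ(ω)} 𝒜(ω)`. -/
noncomputable def phiz (A : S → S → ℝ≥0∞) (z : S) (lam : ℝ) : ℝ≥0∞ :=
  ∑' l : ExcAvoid A z,
    ENNReal.ofReal (Real.exp (lam * (l.1.length + 1))) * chainWeight A (z :: (l.1 ++ [z]))

section Aux

variable (A : S → S → ℝ≥0∞)

lemma chainWeight_cons_cons (a b : S) (t : List S) :
    chainWeight A (a :: b :: t) = A a b * chainWeight A (b :: t) := rfl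

lemma chainWeight_append (a : S) (q : List S) :
    ∀ p : List S, chainWeight A (p ++ a :: q) = chainWeight A (p ++ [a]) * chainWeight A (a :: q)
  | [] => by simp [chainWeight]
  | [x] => by simp [chainWeight_cons_cons, chainWeight, mul_assoc]
  | x :: y :: p => by
    have := chainWeight_append a q (y :: p)
    simp only [List.cons_append, chainWeight_cons_cons] at *
    rw [this, mul_assoc]

lemma chainWeight_ne_top (hfin : ∀ x y, A x y ≠ ⊤) : ∀ l : List S, chainWeight A l ≠ ⊤
  | [] => by simp [chainWeight]
  | [_] => by simp [chainWeight]
  | a :: b :: t => by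
    rw [chainWeight_cons_cons]
    exact ENNReal.mul_ne_top (hfin a b) (chainWeight_ne_top hfin (b :: t))

lemma chain_of_ne_zero : ∀ (a : S) (t : List S), chainWeight A (a :: t) ≠ 0 →
    List.Chain (fun x y => 0 < A x y) a t
  | _, [], _ => List.Chain.nil
  | a, b :: t, h => by
    rw [chainWeight_cons_cons] at h
    exact List.Chain.cons (pos_iff_ne_zero.mpr (by simpa using (mul_ne_zero_iff.mp h).1))
      (chain_of_ne_zero b t (mul_ne_zero_iff.mp h).2)

end Aux


/-- concat equiv -/
def concatEquiv (n : ℕ) : ({l : List S // l.length = n} × S) ≃ {l : List S // l.length = n + 1} where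
  toFun p := ⟨p.1.1 ++ [p.2], by simp [p.1.2]⟩
  invFun l := (⟨l.1.dropLast, by simp [l.2]⟩,
    l.1.getLast (by have := l.2; intro h; rw [h] at this; simp at this))
  left_inv p := by
    ext <;> simp [List.dropLast_concat, List.getLast_concat]
  right_inv l := by
    ext1
    exact List.dropLast_append_getLast _

def consEquiv {β : Type*} (n : ℕ) : (β × {l : List β // l.length = n}) ≃ {l : List β // l.length = n + 1} where
  toFun p := ⟨p.1 :: p.2.1, by simp [p.2.2]⟩
  invFun l := (l.1.head (by have := l.2; intro h; rw [h] at this; simp at this),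
    ⟨l.1.tail, by simp [l.2]⟩)
  left_inv p := by ext <;> simp
  right_inv l := by
    ext1
    exact List.cons_head_tail _

lemma tsum_fiber {α : Type*} (f : α → ℝ≥0∞) (g : α → ℕ) :
    ∑' a, f a = ∑' n : ℕ, ∑' a : {a : α // g a = n}, f a.1 := by
  rw [← (Equiv.sigmaFiberEquiv g).tsum_eq f]
  exact ENNReal.tsum_sigma' _

lemma tsum_len_unique {β : Type*} (f : {l : List β // l.length = 0} → ℝ≥0∞) :
    ∑' l, f l = f ⟨[], rfl⟩ := by
  apply tsum_eq_single
  intro b hb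
  exact absurd (Subtype.ext (List.length_eq_zero_iff.mp b.2)) hb

lemma matPow_eq_pathSum [DecidableEq S] (A : S → S → ℝ≥0∞) (x y : S) :
    ∀ n : ℕ, matPow A (n + 1) x y
      = ∑' l : {l : List S // l.length = n}, chainWeight A (x :: (l.1 ++ [y]))
  | 0 => by
    rw [tsum_len_unique]
    show (∑' w, (if x = w then 1 else 0) * A w y) = _
    rw [tsum_eq_single x (by intro b hb; simp [Ne.symm hb])]
    simp [chainWeight]
  | n + 1 => by
    show (∑' w, matPow A (n+1) x w * A w y) = _
    rw [← (concatEquiv n).tsum_eq]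
    rw [ENNReal.tsum_prod']
    rw [ENNReal.tsum_comm]
    congr 1 with w
    rw [matPow_eq_pathSum A x w n, ← ENNReal.tsum_mul_right]
    congr 1 with l
    show chainWeight A (x :: (l.1 ++ [w])) * A w y = chainWeight A (x :: ((l.1 ++ [w]) ++ [y]))
    have : (x :: ((l.1 ++ [w]) ++ [y]) : List S) = (x :: l.1) ++ w :: [y] := by simp
    rw [this, chainWeight_append A w [y] (x :: l.1)]
    simp [chainWeight_cons_cons, chainWeight]

lemma tsum_list_len_pow {β : Type*} (g : β → ℝ≥0∞) :
    ∀ k : ℕ, ∑' L : {l : List β // l.length = k}, (L.1.map g).prod = (∑' b, g b) ^ k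
  | 0 => by rw [tsum_len_unique]; simp
  | k + 1 => by
    rw [← (consEquiv k).tsum_eq, ENNReal.tsum_prod']
    have : ∀ b : β, ∑' (L : {l : List β // l.length = k}),
        (((consEquiv k (b, L)).1.map g).prod) = g b * (∑' b, g b)^k := by
      intro b
      rw [← tsum_list_len_pow g k, ← ENNReal.tsum_mul_left]
      rfl
    rw [tsum_congr this, ENNReal.tsum_mul_right, pow_succ]
    ring

section Blocks

variable [DecidableEq S] (z : S)

def joinB : {l : List S // z ∉ l} × List {l : List S // z ∉ l} → List S :=
  fun p => p.1.1 ++ (p.2.map (fun B => z :: B.1)).flatten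

lemma joinB_cons (B B' : {l : List S // z ∉ l}) (L : List {l : List S // z ∉ l}) :
    joinB z (B, B' :: L) = B.1 ++ z :: joinB z (B', L) := by
  simp [joinB]

def decodeB : List S → {l : List S // z ∉ l} × List {l : List S // z ∉ l}
  | [] => (⟨[], by simp⟩, [])
  | x :: l =>
    if h : x = z then (⟨[], by simp⟩, (decodeB l).1 :: (decodeB l).2)
    else (⟨x :: (decodeB l).1.1, by
      intro hm
      rcases List.mem_cons.mp hm with e | e
      · exact h e.symm
      · exact (decodeB l).1.2 e⟩, (decodeB l).2)

lemma joinB_decodeB : ∀ l : List S, joinB z (decodeB z l) = l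
  | [] => by simp [decodeB, joinB]
  | x :: l => by
    rw [decodeB]
    by_cases h : x = z
    · rw [dif_pos h]
      have e : joinB z (⟨[], by simp⟩, (decodeB z l).1 :: (decodeB z l).2)
          = z :: joinB z ((decodeB z l).1, (decodeB z l).2) := by
        simp [joinB]
      rw [e, show ((decodeB z l).1, (decodeB z l).2) = decodeB z l from rfl,
        joinB_decodeB l, h]
    · rw [dif_neg h]
      show x :: ((decodeB z l).1.1 ++ _) = _
      rw [show ((decodeB z l).1.1 ++ (List.map (fun B => z :: B.1) (decodeB z l).2).flatten : List S)
        = joinB z (decodeB z l) from rfl, joinB_decodeB l]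

lemma decodeB_append : ∀ (t : List S), z ∉ t → ∀ r : List S,
    (decodeB z (t ++ r)).1.1 = t ++ (decodeB z r).1.1 ∧ (decodeB z (t ++ r)).2 = (decodeB z r).2
  | [], _, r => by simp
  | x :: t, ht, r => by
    have hx : ¬ x = z := fun e => ht (e ▸ List.mem_cons_self (a := x) (l := t))
    have ht' : z ∉ t := fun e => ht (List.mem_cons_of_mem _ e)
    have IH := decodeB_append t ht' r
    rw [List.cons_append, decodeB, dif_neg hx]
    exact ⟨by simp [IH.1], IH.2⟩

lemma decodeB_joinL : ∀ L : List {l : List S // z ∉ l},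
    decodeB z ((L.map (fun B => z :: B.1)).flatten) = (⟨[], by simp⟩, L)
  | [] => by simp [decodeB]
  | B :: L => by
    have h2 := decodeB_append z B.1 B.2 ((L.map (fun B => z :: B.1)).flatten)
    rw [decodeB_joinL L] at h2
    have hr : decodeB z (B.1 ++ (L.map (fun B => z :: B.1)).flatten) = (B, L) := by
      refine Prod.ext (Subtype.ext ?_) h2.2
      rw [h2.1]; simp
    rw [show ((List.map (fun B => z :: B.1) (B :: L)).flatten : List S)
      = z :: (B.1 ++ (L.map (fun B => z :: B.1)).flatten) from rfl]
    rw [decodeB, dif_pos rfl, hr]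

lemma decodeB_joinB (p : {l : List S // z ∉ l} × List {l : List S // z ∉ l}) :
    decodeB z (joinB z p) = p := by
  obtain ⟨B, L⟩ := p
  have h2 := decodeB_append z B.1 B.2 ((L.map (fun B => z :: B.1)).flatten)
  rw [decodeB_joinL] at h2
  refine Prod.ext (Subtype.ext ?_) h2.2
  rw [show joinB z (B, L) = B.1 ++ (L.map (fun B => z :: B.1)).flatten from rfl, h2.1]
  simp

def blockEquiv : ({l : List S // z ∉ l} × List {l : List S // z ∉ l}) ≃ List S where
  toFun := joinB z
  invFun := decodeB z
  left_inv := decodeB_joinB z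
  right_inv := joinB_decodeB z

end Blocks

section Master

variable [DecidableEq S] (A : S → S → ℝ≥0∞) (z : S) (ρ : ℝ≥0∞)

/-- The weight of a path, discounted at rate `ρ⁻¹` per unit length. -/
noncomputable def HW (l : List S) : ℝ≥0∞ :=
  ρ⁻¹ ^ (l.length + 1) * chainWeight A (z :: (l ++ [z]))

lemma HW_split (t m : List S) :
    HW A z ρ (t ++ z :: m) = HW A z ρ t * HW A z ρ m := by
  have hlen : (t ++ z :: m).length + 1 = (t.length + 1) + (m.length + 1) := by
    simp; ring
  have e : (z :: ((t ++ z :: m) ++ [z]) : List S) = (z :: t) ++ z :: (m ++ [z]) := by simp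
  have hw : chainWeight A (z :: ((t ++ z :: m) ++ [z]))
      = chainWeight A (z :: (t ++ [z])) * chainWeight A (z :: (m ++ [z])) := by
    rw [e, chainWeight_append A z (m ++ [z]) (z :: t)]
    rfl
  rw [HW, hlen, pow_add, hw, HW, HW]
  ring

lemma HW_joinB : ∀ (L : List {l : List S // z ∉ l}) (B : {l : List S // z ∉ l}),
    HW A z ρ (joinB z (B, L)) = HW A z ρ B.1 * (L.map (fun B' => HW A z ρ B'.1)).prod
  | [], B => by simp [joinB]
  | B' :: L, B => by
    rw [joinB_cons, HW_split, HW_joinB L B']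
    simp [mul_assoc]

end Master

section Master2

variable [DecidableEq S] (A : S → S → ℝ≥0∞) (z : S) (ρ : ℝ≥0∞)

/-- total discounted excursion weight -/
noncomputable def FF : ℝ≥0∞ := ∑' B : {l : List S // z ∉ l}, HW A z ρ B.1

lemma tsum_HW_left : ∑' l : List S, HW A z ρ l
    = ∑' n : ℕ, ρ⁻¹ ^ (n + 1) * matPow A (n + 1) z z := by
  rw [tsum_fiber (HW A z ρ) (fun l => l.length)]
  congr 1 with n
  rw [matPow_eq_pathSum A z z n, ← ENNReal.tsum_mul_left]
  apply tsum_congr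
  intro l
  rw [HW, l.2]

lemma tsum_HW_right : ∑' l : List S, HW A z ρ l = FF A z ρ * ∑' k : ℕ, (FF A z ρ) ^ k := by
  rw [← (blockEquiv z).tsum_eq (HW A z ρ), ENNReal.tsum_prod']
  have h1 : ∀ B : {l : List S // z ∉ l},
      (∑' L : List {l : List S // z ∉ l}, HW A z ρ (blockEquiv z (B, L)))
      = HW A z ρ B.1 * ∑' L : List {l : List S // z ∉ l},
          (L.map (fun B' => HW A z ρ B'.1)).prod := by
    intro B
    rw [← ENNReal.tsum_mul_left]
    exact tsum_congr fun L => HW_joinB A z ρ L B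
  rw [tsum_congr h1, ENNReal.tsum_mul_right]
  congr 1
  rw [tsum_fiber _ (fun L : List {l : List S // z ∉ l} => L.length)]
  exact tsum_congr fun k => tsum_list_len_pow _ k

lemma HW_eq_zero_of_not_exc (hρT : ρ ≠ ⊤) {l : List S}
    (h1 : l ∉ ExcAvoid A z) (h2 : z ∉ l) : HW A z ρ l = 0 := by
  by_contra hne
  apply h1
  constructor
  · apply chain_of_ne_zero
    intro hcw
    exact hne (by rw [HW, hcw, mul_zero])
  · intro v hv hvz; exact h2 (hvz ▸ hv)

lemma phiz_eq_FF (hρ0 : 0 < ρ) (hρT : ρ ≠ ⊤) :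
    phiz A z (- Real.log ρ.toReal) = FF A z ρ := by
  have hr : 0 < ρ.toReal := ENNReal.toReal_pos hρ0.ne' hρT
  have hfac : ∀ m : ℕ, ENNReal.ofReal (Real.exp ((- Real.log ρ.toReal) * (m + 1)))
      = ρ⁻¹ ^ (m + 1) := by
    intro m
    have e1 : (- Real.log ρ.toReal) * ((m : ℝ) + 1)
        = -(((m + 1 : ℕ) : ℝ) * Real.log ρ.toReal) := by push_cast; ring
    rw [e1, Real.exp_neg, Real.exp_nat_mul, Real.exp_log hr,
      ENNReal.ofReal_inv_of_pos (pow_pos hr _), ENNReal.ofReal_pow hr.le,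
      ENNReal.ofReal_toReal hρT, ← ENNReal.inv_pow]
  rw [phiz]
  have h1 : ∀ l : ExcAvoid A z,
      ENNReal.ofReal (Real.exp ((- Real.log ρ.toReal) * (l.1.length + 1)))
        * chainWeight A (z :: (l.1 ++ [z])) = HW A z ρ l.1 := by
    intro l; rw [hfac l.1.length, HW]
  rw [tsum_congr h1, FF]
  rw [tsum_subtype (ExcAvoid A z) (HW A z ρ)]
  rw [show (∑' B : {l : List S // z ∉ l}, HW A z ρ B.1)
    = ∑' l : {l : List S | z ∉ l}, HW A z ρ l.1 from rfl]
  rw [tsum_subtype {l : List S | z ∉ l} (HW A z ρ)]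
  apply tsum_congr
  intro l
  by_cases hx : l ∈ ExcAvoid A z
  · rw [Set.indicator_of_mem hx, Set.indicator_of_mem (show l ∈ {l : List S | z ∉ l} from fun hz => hx.2 z hz rfl)]
  · rw [Set.indicator_of_notMem hx]
    by_cases h2 : l ∈ {l : List S | z ∉ l}
    · rw [Set.indicator_of_mem h2]
      exact (HW_eq_zero_of_not_exc A z ρ hρT hx h2).symm
    · rw [Set.indicator_of_notMem h2]

end Master2

section Count

variable [DecidableEq S] (A : S → S → ℝ≥0∞) (z : S) (ρ : ℝ≥0∞)

lemma joinB_length : ∀ (L : List {l : List S // z ∉ l}) (B : {l : List S // z ∉ l}),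
    (joinB z (B, L)).length + 1 = (B.1.length + 1) + (L.map (fun B' => B'.1.length + 1)).sum
  | [], B => by simp [joinB]
  | B' :: L, B => by
    rw [joinB_cons]
    have := joinB_length L B'
    simp only [List.length_append, List.length_cons, List.map_cons, List.sum_cons]
    omega

lemma key_count (T : Finset {l : List S // z ∉ l}) (Lb : ℕ)
    (hLb : ∀ B ∈ T, B.1.length + 1 ≤ Lb) (k : ℕ) :
    (∑ B ∈ T, HW A z ρ B.1) ^ (k + 1)
      ≤ ∑ n ∈ Finset.Ico k ((k + 1) * Lb), ρ⁻¹ ^ (n + 1) * matPow A (n + 1) z z := by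
  classical
  set f : {l : List S // z ∉ l} → ℝ≥0∞ := fun B => HW A z ρ B.1 with hf
  set g : {l : List S // z ∉ l} → ℝ≥0∞ := fun B => if B ∈ T then f B else 0 with hg
  have hgsum : ∑' B, g B = ∑ B ∈ T, f B := by
    rw [tsum_eq_sum (s := T) (fun b hb => if_neg hb)]
    exact Finset.sum_congr rfl fun b hb => if_pos hb
  -- the target function on List S
  set G : List S → ℝ≥0∞ := fun l =>
    if l.length ∈ Finset.Ico k ((k + 1) * Lb) then HW A z ρ l else 0 with hG
  -- pointwise bound
  have hpt : ∀ (B : {l : List S // z ∉ l}) (Lk : {L : List {l : List S // z ∉ l} // L.length = k}),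
      g B * (Lk.1.map g).prod ≤ G (joinB z (B, Lk.1)) := by
    intro B Lk
    by_cases hall : B ∈ T ∧ ∀ B' ∈ Lk.1, B' ∈ T
    · obtain ⟨hB, hLk⟩ := hall
      have hmap : Lk.1.map g = Lk.1.map f := List.map_congr_left fun B' hB' => if_pos (hLk B' hB')
      have hlen : (joinB z (B, Lk.1)).length ∈ Finset.Ico k ((k + 1) * Lb) := by
        have hj := joinB_length z Lk.1 B
        have h1 : k ≤ (Lk.1.map (fun B' => B'.1.length + 1)).sum := by
          have := List.length_le_sum_of_one_le (Lk.1.map (fun B' => B'.1.length + 1))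
            (by intro i hi; rcases List.mem_map.mp hi with ⟨B', _, rfl⟩; omega)
          simpa [Lk.2] using this
        have h2 : (Lk.1.map (fun B' => B'.1.length + 1)).sum ≤ k * Lb := by
          have := List.sum_le_card_nsmul (Lk.1.map (fun B' => B'.1.length + 1)) Lb
            (by intro x hx; rcases List.mem_map.mp hx with ⟨B', hB', rfl⟩
                exact hLb B' (hLk B' hB'))
          simpa [Lk.2, smul_eq_mul] using this
        have h3 : B.1.length + 1 ≤ Lb := hLb B hB
        rw [Finset.mem_Ico]
        constructor
        · omega
        · have : (k + 1) * Lb = Lb + k * Lb := by ring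
          omega
      rw [hG]
      simp only [hlen, if_pos]
      rw [HW_joinB, hg]
      simp only [if_pos hB]
      rw [hmap]
    · rw [not_and_or] at hall
      rcases hall with hB | hB
      · rw [hg]; simp only [if_neg hB, zero_mul]; exact zero_le
      · push_neg at hB
        obtain ⟨B', hB', hB'T⟩ := hB
        have : (0 : ℝ≥0∞) ∈ Lk.1.map g := by
          apply List.mem_map.mpr
          exact ⟨B', hB', by rw [hg]; simp [hB'T]⟩
        rw [List.prod_eq_zero this, mul_zero]
        exact zero_le
  -- assemble
  calc (∑ B ∈ T, f B) ^ (k + 1)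
      = (∑' B, g B) * (∑' B, g B) ^ k := by rw [hgsum, pow_succ']
    _ = ∑' p : {l : List S // z ∉ l} × {L : List {l : List S // z ∉ l} // L.length = k},
          g p.1 * (p.2.1.map g).prod := by
        rw [ENNReal.tsum_prod']
        rw [← tsum_list_len_pow g k]
        rw [← ENNReal.tsum_mul_right]
        congr 1 with B
        rw [← ENNReal.tsum_mul_left]
    _ ≤ ∑' p : {l : List S // z ∉ l} × {L : List {l : List S // z ∉ l} // L.length = k},
          G (joinB z (p.1, p.2.1)) := Summable.tsum_le_tsum (fun p => hpt p.1 p.2) ENNReal.summable ENNReal.summable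
    _ ≤ ∑' l : List S, G l := by
        apply ENNReal.tsum_comp_le_tsum_of_injective
        intro p q hpq
        have := congrArg (decodeB z) hpq
        rw [decodeB_joinB, decodeB_joinB] at this
        injection this with h1 h2
        exact Prod.ext_iff.mpr ⟨h1, Subtype.ext h2⟩
    _ = ∑ n ∈ Finset.Ico k ((k + 1) * Lb), ρ⁻¹ ^ (n + 1) * matPow A (n + 1) z z := by
        rw [tsum_fiber G (fun l => l.length)]
        have hfib : ∀ n : ℕ, (∑' l : {l : List S // l.length = n}, G l.1)
            = if n ∈ Finset.Ico k ((k + 1) * Lb) then ρ⁻¹ ^ (n + 1) * matPow A (n + 1) z z else 0 := by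
          intro n
          by_cases hn : n ∈ Finset.Ico k ((k + 1) * Lb)
          · rw [if_pos hn]
            rw [matPow_eq_pathSum A z z n, ← ENNReal.tsum_mul_left]
            apply tsum_congr
            intro l
            rw [hG]
            simp only [l.2, hn, if_pos]
            rw [HW]
            rw [l.2]
          · rw [if_neg hn]
            rw [ENNReal.tsum_eq_zero]
            intro l
            have hni : ¬ (l.1.length ∈ Finset.Ico k ((k + 1) * Lb)) := by rw [l.2]; exact hn
            have he : G l.1 = if (l.1.length ∈ Finset.Ico k ((k + 1) * Lb))
                then HW A z ρ l.1 else 0 := rfl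
            rw [he, if_neg hni]
        rw [tsum_congr hfib]
        rw [tsum_eq_sum (s := Finset.Ico k ((k+1) * Lb)) (fun n hn => if_neg hn)]
        exact Finset.sum_congr rfl fun n hn => if_pos hn

end Count

set_option maxHeartbeats 1000000 in
lemma FF_le_one [DecidableEq S] (A : S → S → ℝ≥0∞) (hfin : ∀ x y, A x y ≠ ⊤)
    (z : S) (ρ : ℝ≥0∞) (hρ0 : 0 < ρ) (hρT : ρ ≠ ⊤)
    (hρz : Tendsto (fun n : ℕ => (matPow A n z z) ^ ((n : ℝ)⁻¹))
        (atTop ⊓ Filter.principal {n : ℕ | 0 < matPow A n z z}) (nhds ρ)) :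
    FF A z ρ ≤ 1 := by
  by_contra hgt
  push_neg at hgt
  rw [FF, ENNReal.tsum_eq_iSup_sum, lt_iSup_iff] at hgt
  obtain ⟨T, hT⟩ := hgt
  set c : ℝ≥0∞ := ∑ B ∈ T, HW A z ρ B.1 with hc
  have hcT : c ≠ ⊤ := by
    rw [hc]
    refine (ENNReal.sum_lt_top.mpr fun B _ => ?_).ne
    exact (ENNReal.mul_ne_top (ENNReal.pow_ne_top (ENNReal.inv_ne_top.mpr hρ0.ne'))
      (chainWeight_ne_top A hfin _)).lt_top
  set Lb : ℕ := T.sup (fun B => B.1.length) + 1 with hLbdef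
  have hLbB : ∀ B ∈ T, B.1.length + 1 ≤ Lb := fun B hB => Nat.succ_le_succ (Finset.le_sup (f := fun B => B.1.length) hB)
  have hLb1 : 1 ≤ Lb := Nat.succ_le_succ (Nat.zero_le _)
  set r : ℝ := c.toReal with hrdef
  have hr1 : 1 < r := by
    rw [hrdef, ← ENNReal.toReal_one]
    exact (ENNReal.toReal_lt_toReal (by simp) hcT).mpr hT
  have hr0 : (0:ℝ) < r := lt_trans one_pos hr1
  set x : ℝ := r ^ ((2 * (Lb:ℝ)))⁻¹ with hxdef
  have hx1 : 1 < x := by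
    rw [hxdef]
    refine (Real.one_lt_rpow_iff_of_pos hr0).mpr (Or.inl ⟨hr1, by positivity⟩)
  set θ : ℝ≥0∞ := ENNReal.ofReal x with hθdef
  have hθ1 : 1 < θ := by
    rw [hθdef, ← ENNReal.ofReal_one]
    exact (ENNReal.ofReal_lt_ofReal_iff (lt_trans one_pos hx1)).mpr hx1
  have hθT : θ ≠ ⊤ := ENNReal.ofReal_ne_top
  -- the eventual key inequality
  set v : ℝ := r ^ ((2:ℝ))⁻¹ with hvdef
  have hv0 : (0:ℝ) < v := Real.rpow_pos_of_pos hr0 _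
  have hv1 : 1 < v := (Real.one_lt_rpow_iff_of_pos hr0).mpr (Or.inl ⟨hr1, by norm_num⟩)
  set w : ℝ := Real.sqrt v - 1 with hwdef
  have hw0 : 0 < w := by
    rw [hwdef, sub_pos]
    have := Real.lt_sqrt (x := 1) (y := v) (by norm_num)
    rw [one_pow] at this
    exact this.mpr hv1 |>.trans_le le_rfl
  have hkeyR : ∀ k : ℕ, (Lb : ℝ) / (w * w) ≤ (k + 1 : ℝ) →
      (((k+1) * Lb : ℕ) : ℝ) * x ^ ((k+1) * Lb) ≤ r ^ (k + 1) := by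
    intro k hk
    have hM : (((k+1) * Lb : ℕ) : ℝ) = ((k:ℝ) + 1) * Lb := by push_cast; ring
    have hxM : x ^ ((k+1) * Lb) = v ^ (k+1) := by
      rw [hxdef, hvdef, ← Real.rpow_natCast (r ^ ((2 * (Lb:ℝ)))⁻¹) ((k+1) * Lb),
        ← Real.rpow_natCast (r ^ ((2:ℝ))⁻¹) (k+1),
        ← Real.rpow_mul hr0.le, ← Real.rpow_mul hr0.le]
      congr 1
      have hLbne : (Lb:ℝ) ≠ 0 := by positivity
      push_cast
      field_simp
    have hrk : r ^ (k+1) = v ^ (k+1) * v ^ (k+1) := by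
      rw [hvdef, ← Real.rpow_natCast (r ^ ((2:ℝ))⁻¹) (k+1), ← Real.rpow_mul hr0.le,
        ← Real.rpow_add hr0, ← Real.rpow_natCast r (k+1)]
      congr 1
      ring
    rw [hxM, hrk, hM]
    have hMv : ((k:ℝ) + 1) * Lb ≤ v ^ (k+1) := by
      have hsq : Real.sqrt v ^ 2 = v := Real.sq_sqrt hv0.le
      have hb : ((k:ℝ)+1) * w ≤ (1 + w) ^ (k+1) := by
        have := one_add_mul_le_pow (a := w) (by linarith) (k+1)
        push_cast at this ⊢
        nlinarith
      have h1w : (1 + w) = Real.sqrt v := by rw [hwdef]; ring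
      have hvk : v ^ (k+1) = ((1 + w) ^ (k+1)) ^ 2 := by
        rw [h1w, ← pow_mul, mul_comm (k+1) 2, pow_mul, hsq]
      rw [hvk]
      have h2 : (((k:ℝ)+1) * w) ^ 2 ≤ ((1 + w) ^ (k+1)) ^ 2 := by
        apply sq_le_sq'
        · nlinarith [pow_nonneg (by linarith : (0:ℝ) ≤ 1 + w) (k+1)]
        · exact hb
      have h3 : ((k:ℝ)+1) * Lb ≤ (((k:ℝ)+1) * w) ^ 2 := by
        have hk1 : (0:ℝ) ≤ (k:ℝ) + 1 := by positivity
        have : (Lb : ℝ) ≤ ((k:ℝ)+1) * (w * w) := by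
          rw [div_le_iff₀ (by positivity)] at hk
          nlinarith
        nlinarith
      linarith
    have hvpos : (0:ℝ) < v ^ (k+1) := pow_pos hv0 _
    exact mul_le_mul_of_nonneg_right hMv hvpos.le
  -- transfer to ℝ≥0∞
  have hkeyE : ∀ k : ℕ, (Lb : ℝ) / (w * w) ≤ (k + 1 : ℝ) →
      (((k+1) * Lb : ℕ) : ℝ≥0∞) * θ ^ ((k+1) * Lb) ≤ c ^ (k + 1) := by
    intro k hk
    have hx0 : (0:ℝ) ≤ x := le_of_lt (lt_trans one_pos hx1)
    have e1 : (((k+1) * Lb : ℕ) : ℝ≥0∞) = ENNReal.ofReal (((k+1) * Lb : ℕ) : ℝ) := by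
      rw [ENNReal.ofReal_natCast]
    have e2 : θ ^ ((k+1) * Lb) = ENNReal.ofReal (x ^ ((k+1) * Lb)) := by
      rw [hθdef, ← ENNReal.ofReal_pow hx0]
    have e3 : c ^ (k+1) = ENNReal.ofReal (r ^ (k+1)) := by
      rw [hrdef, ← ENNReal.toReal_pow, ENNReal.ofReal_toReal (ENNReal.pow_ne_top hcT)]
    rw [e1, e2, e3, ← ENNReal.ofReal_mul (by positivity)]
    exact ENNReal.ofReal_le_ofReal (hkeyR k hk)
  -- tendsto contradiction
  have hρθ : ρ < ρ * θ := by
    nth_rewrite 1 [← mul_one ρ]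
    exact ENNReal.mul_lt_mul_right hρ0.ne' hρT hθ1
  have hmem := hρz (isOpen_Iio.mem_nhds hρθ)
  rw [Filter.mem_map, Filter.mem_inf_principal] at hmem
  obtain ⟨N, hN⟩ := Filter.mem_atTop_sets.mp hmem
  -- choose k
  set k : ℕ := max N (Nat.ceil ((Lb : ℝ) / (w * w))) with hkdef
  have hkge : (Lb : ℝ) / (w * w) ≤ (k + 1 : ℝ) := by
    calc (Lb : ℝ) / (w * w) ≤ (Nat.ceil ((Lb : ℝ) / (w * w)) : ℝ) := Nat.le_ceil _
    _ ≤ (k : ℝ) := by exact_mod_cast Nat.cast_le.mpr (le_max_right _ _)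
    _ ≤ (k : ℝ) + 1 := by linarith
  set M : ℕ := (k+1) * Lb with hMdef
  have hkM : k < M := by
    calc k < k + 1 := Nat.lt_succ_self k
    _ ≤ (k+1) * Lb := Nat.le_mul_of_pos_right _ hLb1
  have hcount := key_count A z ρ T Lb hLbB k
  set q : ℝ≥0∞ := c ^ (k+1) / (M : ℝ≥0∞) with hqdef
  have hM0 : (M : ℝ≥0∞) ≠ 0 := by
    simp only [Ne, Nat.cast_eq_zero]
    omega
  have hMT : (M : ℝ≥0∞) ≠ ⊤ := ENNReal.natCast_ne_top M
  have hne : (Finset.Ico k M).Nonempty := ⟨k, Finset.mem_Ico.mpr ⟨le_refl k, hkM⟩⟩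
  obtain ⟨n, hnmem, hmax⟩ := Finset.exists_max_image (Finset.Ico k M)
    (fun n => ρ⁻¹ ^ (n+1) * matPow A (n+1) z z) hne
  have hq : q ≤ ρ⁻¹ ^ (n+1) * matPow A (n+1) z z := by
    rw [hqdef, ENNReal.div_le_iff_le_mul (Or.inl hM0) (Or.inl hMT)]
    calc c ^ (k+1) ≤ ∑ i ∈ Finset.Ico k M, ρ⁻¹ ^ (i+1) * matPow A (i+1) z z := hcount
    _ ≤ ∑ _i ∈ Finset.Ico k M, (ρ⁻¹ ^ (n+1) * matPow A (n+1) z z) :=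
        Finset.sum_le_sum (fun i hi => hmax i hi)
    _ = (M - k : ℕ) • (ρ⁻¹ ^ (n+1) * matPow A (n+1) z z) := by
        rw [Finset.sum_const, Nat.card_Ico]
    _ = ((M - k : ℕ) : ℝ≥0∞) * (ρ⁻¹ ^ (n+1) * matPow A (n+1) z z) := nsmul_eq_mul _ _
    _ ≤ (M : ℝ≥0∞) * (ρ⁻¹ ^ (n+1) * matPow A (n+1) z z) :=
        mul_le_mul_left (show ((M - k : ℕ) : ℝ≥0∞) ≤ (M : ℝ≥0∞)
          from Nat.cast_le.mpr (Nat.sub_le M k)) _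
    _ = (ρ⁻¹ ^ (n+1) * matPow A (n+1) z z) * (M : ℝ≥0∞) := mul_comm _ _
  have hnIco := Finset.mem_Ico.mp hnmem
  set m : ℕ := n + 1 with hmdef
  set u : ℝ≥0∞ := matPow A m z z with hudef
  have hθq : θ ^ M ≤ q := by
    rw [hqdef, ENNReal.le_div_iff_mul_le (Or.inl hM0) (Or.inl hMT)]
    rw [mul_comm]
    exact hkeyE k hkge
  have humq : ρ ^ m * q ≤ u := by
    have : ρ ^ m * (ρ⁻¹ ^ m * u) = u := by
      rw [← mul_assoc, ← mul_pow, ENNReal.mul_inv_cancel hρ0.ne' hρT, one_pow, one_mul]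
    calc ρ ^ m * q ≤ ρ ^ m * (ρ⁻¹ ^ m * u) := mul_le_mul_right hq _
    _ = u := this
  have hu : (ρ * θ) ^ m ≤ u := by
    have h1 : θ ^ m ≤ θ ^ M := pow_le_pow_right₀ hθ1.le (by omega)
    calc (ρ * θ) ^ m = ρ ^ m * θ ^ m := mul_pow ρ θ m
    _ ≤ ρ ^ m * θ ^ M := mul_le_mul_right h1 _
    _ ≤ ρ ^ m * q := mul_le_mul_right hθq _
    _ ≤ u := humq
  have hρθ0 : ρ * θ ≠ 0 := mul_ne_zero hρ0.ne' (by positivity)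
  have hupos : 0 < u := lt_of_lt_of_le (pos_iff_ne_zero.mpr (pow_ne_zero m hρθ0)) hu
  have hmN : N ≤ m := by omega
  have hlt := hN m hmN hupos
  have hge : ρ * θ ≤ u ^ ((m:ℝ)⁻¹) := by
    have e : ((ρ * θ) ^ m) ^ ((m:ℝ)⁻¹) = ρ * θ := by
      rw [← ENNReal.rpow_natCast (ρ * θ) m, ← ENNReal.rpow_mul,
        mul_inv_cancel₀ (Nat.cast_ne_zero.mpr (by omega) : ((m:ℝ) ≠ 0)),
        ENNReal.rpow_one]
    rw [← e]
    exact ENNReal.rpow_le_rpow hu (by positivity)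
  exact absurd hlt (not_lt.mpr hge)


theorem excursion_mgf_at_critical_point [Countable S] [DecidableEq S]
    (A : S → S → ℝ≥0∞) (hfin : ∀ x y, A x y ≠ ⊤)
    (hirr : ∀ x y : S, ∃ n, 1 ≤ n ∧ 0 < matPow A n x y)
    (z : S) (ρ : ℝ≥0∞) (hρ0 : 0 < ρ) (hρT : ρ ≠ ⊤)
    (hρ : ∀ x, Tendsto (fun n : ℕ => (matPow A n x x) ^ ((n : ℝ)⁻¹))
        (atTop ⊓ Filter.principal {n : ℕ | 0 < matPow A n x x}) (nhds ρ)) :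
    ((∑' n : ℕ, ρ⁻¹ ^ (n + 1) * matPow A (n + 1) z z) ≠ ⊤ →
        phiz A z (- Real.log ρ.toReal) < 1) ∧
    ((∑' n : ℕ, ρ⁻¹ ^ (n + 1) * matPow A (n + 1) z z) = ⊤ →
        phiz A z (- Real.log ρ.toReal) = 1) := by
  have hphi := phiz_eq_FF A z ρ hρ0 hρT
  have hmaster : (∑' n : ℕ, ρ⁻¹ ^ (n + 1) * matPow A (n + 1) z z)
      = FF A z ρ * ∑' k : ℕ, (FF A z ρ) ^ k := by
    rw [← tsum_HW_left, tsum_HW_right]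
  constructor
  · intro hG
    rw [hphi]
    by_contra hlt
    push_neg at hlt
    apply hG
    rw [hmaster]
    have h1 : (∑' k : ℕ, (FF A z ρ) ^ k) = ⊤ := by
      refine le_antisymm le_top ?_
      calc (⊤ : ℝ≥0∞) = ∑' _ : ℕ, (1 : ℝ≥0∞) :=
            (ENNReal.tsum_const_eq_top_of_ne_zero one_ne_zero).symm
        _ ≤ ∑' k : ℕ, (FF A z ρ) ^ k :=
            Summable.tsum_le_tsum (fun k => one_le_pow_of_one_le' hlt k)
              ENNReal.summable ENNReal.summable
    rw [h1, ENNReal.mul_top (by intro h0; rw [h0] at hlt; exact absurd hlt (by simp))]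
  · intro hG
    rw [hphi]
    have hle := FF_le_one A hfin z ρ hρ0 hρT (hρ z)
    refine le_antisymm hle ?_
    by_contra hlt2
    push_neg at hlt2
    have hgeo : (∑' k : ℕ, (FF A z ρ) ^ k) = (1 - FF A z ρ)⁻¹ := ENNReal.tsum_geometric _
    rw [hmaster, hgeo] at hG
    have hFFT : FF A z ρ ≠ ⊤ := ne_top_of_lt hlt2
    have hinvT : (1 - FF A z ρ)⁻¹ ≠ ⊤ :=
      ENNReal.inv_ne_top.mpr (tsub_pos_iff_lt.mpr hlt2).ne'
    exact (ENNReal.mul_ne_top hFFT hinvT) hG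
end
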